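/- arXiv:1703.06448 — 4 statements merged into one kernel-verified Lean document; each statement's English description precedes it below -/
import Mathlib

section
/- Let d ≥ 2, γ ∈ (0,1], ν ∈ (0,2), and let b : [0,π] → [0,∞) satisfy, for some constants c₁, c₂ > 0: c₁ (sin θ)^{−(d−1)−ν} ≤ b(θ) ≤ c₂ (sin θ)^{−(d−1)−ν} whenever θ ∈ (0,π) and cos θ ≥ 0, and c₁ (sin θ)^{1+γ+ν} ≤ b(θ) ≤ c₂ (sin θ)^{1+γ+ν} whenever θ ∈ (0,π) and cos θ < 0. Define, for measurable f : ℝ^d → [0,∞] and v ≠ v' in ℝ^d, K_f(v,v') = (2^{d−1}/|v'−v|) ∫_{{w : w·(v'−v)=0}} f(v+w) r_w^{γ−d+2} b(θ_w) dH^{d−1}(w), where r_w = (|v'−v|² + |w|²)^{1/2} and θ_w ∈ [0,π] is determined by cos(θ_w/2) = |w|/r_w. Then there exist constants C₁, C₂ > 0, depending only on d, γ, ν, c₁, c₂, such that for every measurable f : ℝ^d → [0,∞] and all v ≠ v': C₁ · J ≤ K_f(v,v') ≤ C₂ · J, where J = (∫_{{w : w·(v'−v)=0}} f(v+w) |w|^{1+γ+ν}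 dH^{d−1}(w)) · |v'−v|^{−d−ν}. -/
open MeasureTheory
open scoped ENNReal InnerProductSpace

set_option maxHeartbeats 1000000
noncomputable section


lemma core_ineq
    (d : ℕ) (hd : 2 ≤ d) (γ ν : ℝ) (hγ0 : 0 < γ) (hν0 : 0 < ν)
    (b : ℝ → ℝ)
    (c₁ c₂ : ℝ) (hc₁ : 0 < c₁) (hc₂ : 0 < c₂)
    (hb_pos : ∀ θ : ℝ, 0 < θ → θ < Real.pi → 0 ≤ Real.cos θ →
      c₁ * Real.sin θ ^ (-(d : ℝ) + 1 - ν) ≤ b θ ∧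
      b θ ≤ c₂ * Real.sin θ ^ (-(d : ℝ) + 1 - ν))
    (hb_neg : ∀ θ : ℝ, 0 < θ → θ < Real.pi → Real.cos θ < 0 →
      c₁ * Real.sin θ ^ (1 + γ + ν) ≤ b θ ∧
      b θ ≤ c₂ * Real.sin θ ^ (1 + γ + ν))
    (s t : ℝ) (hs : 0 < s) (ht : 0 < t) :
    min (c₁ * Real.exp (Real.log 2 * (((d : ℝ) - 1) + (-(d : ℝ) + 1 - ν))))
        (c₁ * Real.exp (Real.log 2 * (((d : ℝ) - 1) + (1 + γ + ν) - ((d : ℝ) + γ + 2 * ν) / 2)))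
      * (s ^ (1 + γ + ν) * t ^ (-(d : ℝ) - ν))
      ≤ (2 : ℝ) ^ (d - 1) / t *
          (Real.sqrt (t ^ 2 + s ^ 2) ^ (γ - (d : ℝ) + 2) *
            b (2 * Real.arccos (s / Real.sqrt (t ^ 2 + s ^ 2)))) ∧
    (2 : ℝ) ^ (d - 1) / t *
          (Real.sqrt (t ^ 2 + s ^ 2) ^ (γ - (d : ℝ) + 2) *
            b (2 * Real.arccos (s / Real.sqrt (t ^ 2 + s ^ 2))))
      ≤ max (c₂ * Real.exp (Real.log 2 * (((d : ℝ) - 1) + (-(d : ℝ) + 1 - ν) + ((d : ℝ) + γ + 2 * ν) / 2)))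
            (c₂ * Real.exp (Real.log 2 * (((d : ℝ) - 1) + (1 + γ + ν))))
        * (s ^ (1 + γ + ν) * t ^ (-(d : ℝ) - ν)) := by
  set r : ℝ := Real.sqrt (t ^ 2 + s ^ 2) with hrdef
  have hr2 : r ^ 2 = t ^ 2 + s ^ 2 := Real.sq_sqrt (by positivity)
  have hr0 : 0 < r := Real.sqrt_pos.mpr (by positivity)
  have hsr : s < r := by nlinarith
  have hy0 : 0 < s / r := div_pos hs hr0
  have hy1 : s / r < 1 := (div_lt_one hr0).mpr hsr
  have hθ0 : 0 < 2 * Real.arccos (s / r) := by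
    have := Real.arccos_pos.mpr hy1; linarith
  have hθπ : 2 * Real.arccos (s / r) < Real.pi := by
    have := Real.arccos_lt_pi_div_two.mpr hy0; linarith
  have hcos : Real.cos (2 * Real.arccos (s / r)) = 2 * (s / r) ^ 2 - 1 := by
    rw [Real.cos_two_mul, Real.cos_arccos (by linarith) hy1.le]
  have hsin : Real.sin (2 * Real.arccos (s / r)) = 2 * t * s / r ^ 2 := by
    rw [Real.sin_two_mul, Real.sin_arccos, Real.cos_arccos (by linarith) hy1.le]
    have h1 : 1 - (s / r) ^ 2 = (t / r) ^ 2 := by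
      field_simp
      nlinarith
    rw [h1, Real.sqrt_sq (by positivity)]
    field_simp
  have hσ : 0 < 2 * t * s / r ^ 2 := by positivity
  have hlogσ : Real.log (2 * t * s / r ^ 2)
      = Real.log 2 + Real.log t + Real.log s - 2 * Real.log r := by
    rw [Real.log_div (by positivity) (by positivity),
      Real.log_mul (by positivity) hs.ne', Real.log_mul (by norm_num) ht.ne', Real.log_pow]
    push_cast
    ring
  have h2pow : (2 : ℝ) ^ (d - 1) = Real.exp (Real.log 2 * ((d : ℝ) - 1)) := by
    rw [← Real.rpow_natCast 2 (d - 1), Real.rpow_def_of_pos (by norm_num)]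
    congr 2
    rw [Nat.cast_sub (by omega)]
    norm_num
  have hprod : ∀ c q : ℝ,
      (2 : ℝ) ^ (d - 1) / t * (r ^ (γ - (d : ℝ) + 2) * (c * (2 * t * s / r ^ 2) ^ q))
        = c * Real.exp (Real.log 2 * ((d : ℝ) - 1) - Real.log t
            + Real.log r * (γ - (d : ℝ) + 2)
            + (Real.log 2 + Real.log t + Real.log s - 2 * Real.log r) * q) := by
    intro c q
    rw [h2pow, Real.rpow_def_of_pos hr0, Real.rpow_def_of_pos hσ, hlogσ,
      Real.exp_add, Real.exp_add, Real.exp_sub, Real.exp_log ht]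
    ring
  have hP : ∀ C : ℝ, C * (s ^ (1 + γ + ν) * t ^ (-(d : ℝ) - ν))
      = C * Real.exp (Real.log s * (1 + γ + ν) + Real.log t * (-(d : ℝ) - ν)) := by
    intro C
    rw [Real.rpow_def_of_pos hs, Real.rpow_def_of_pos ht, Real.exp_add]
  have hm : (0 : ℝ) < (d : ℝ) + γ + 2 * ν := by positivity
  have hPnn : 0 ≤ s ^ (1 + γ + ν) * t ^ (-(d : ℝ) - ν) := by positivity
  have hLsLr : Real.log s ≤ Real.log r := Real.log_le_log hs hsr.le
  have hbb : 0 ≤ b (2 * Real.arccos (s / r)) := by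
    rcases le_or_gt 0 (Real.cos (2 * Real.arccos (s / r))) with h | h
    · have h1 := (hb_pos _ hθ0 hθπ h).1
      have h2 : 0 < c₁ * Real.sin (2 * Real.arccos (s / r)) ^ (-(d : ℝ) + 1 - ν) := by
        rw [hsin]; positivity
      linarith
    · have h1 := (hb_neg _ hθ0 hθπ h).1
      have h2 : 0 < c₁ * Real.sin (2 * Real.arccos (s / r)) ^ (1 + γ + ν) := by
        rw [hsin]; positivity
      linarith
  rcases le_or_gt t s with hts | hts
  · -- case cos θ ≥ 0, exponent p = -d+1-ν
    have hcosnn : 0 ≤ Real.cos (2 * Real.arccos (s / r)) := by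
      rw [hcos, sub_nonneg, div_pow, ← mul_div_assoc, le_div_iff₀ (by positivity)]
      nlinarith
    obtain ⟨hbl, hbu⟩ := hb_pos _ hθ0 hθπ hcosnn
    rw [hsin] at hbl hbu
    have h2r : 2 * Real.log r ≤ Real.log 2 + 2 * Real.log s := by
      have h1 : Real.log (r ^ 2) ≤ Real.log (2 * s ^ 2) :=
        Real.log_le_log (by positivity) (by nlinarith)
      rw [Real.log_pow, Real.log_mul (by norm_num) (by positivity), Real.log_pow] at h1
      push_cast at h1
      linarith
    constructor
    · calc min (c₁ * Real.exp (Real.log 2 * (((d : ℝ) - 1) + (-(d : ℝ) + 1 - ν))))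
            (c₁ * Real.exp (Real.log 2 * (((d : ℝ) - 1) + (1 + γ + ν) - ((d : ℝ) + γ + 2 * ν) / 2)))
            * (s ^ (1 + γ + ν) * t ^ (-(d : ℝ) - ν))
          ≤ (c₁ * Real.exp (Real.log 2 * (((d : ℝ) - 1) + (-(d : ℝ) + 1 - ν))))
            * (s ^ (1 + γ + ν) * t ^ (-(d : ℝ) - ν)) :=
            mul_le_mul_of_nonneg_right (min_le_left _ _) hPnn
        _ = c₁ * Real.exp (Real.log 2 * (((d : ℝ) - 1) + (-(d : ℝ) + 1 - ν))
              + (Real.log s * (1 + γ + ν) + Real.log t * (-(d : ℝ) - ν))) := by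
            rw [Real.rpow_def_of_pos hs, Real.rpow_def_of_pos ht, ← Real.exp_add, mul_assoc,
              ← Real.exp_add]
        _ ≤ c₁ * Real.exp (Real.log 2 * ((d : ℝ) - 1) - Real.log t
              + Real.log r * (γ - (d : ℝ) + 2)
              + (Real.log 2 + Real.log t + Real.log s - 2 * Real.log r) * (-(d : ℝ) + 1 - ν)) := by
            have hXY : Real.log 2 * (((d : ℝ) - 1) + (-(d : ℝ) + 1 - ν))
                + (Real.log s * (1 + γ + ν) + Real.log t * (-(d : ℝ) - ν))
                ≤ Real.log 2 * ((d : ℝ) - 1) - Real.log t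
                + Real.log r * (γ - (d : ℝ) + 2)
                + (Real.log 2 + Real.log t + Real.log s - 2 * Real.log r) * (-(d : ℝ) + 1 - ν) := by
              nlinarith [mul_nonneg hm.le (sub_nonneg.mpr hLsLr)]
            exact mul_le_mul_of_nonneg_left (Real.exp_le_exp.mpr hXY) hc₁.le
        _ = (2 : ℝ) ^ (d - 1) / t * (r ^ (γ - (d : ℝ) + 2)
              * (c₁ * (2 * t * s / r ^ 2) ^ (-(d : ℝ) + 1 - ν))) := (hprod _ _).symm
        _ ≤ (2 : ℝ) ^ (d - 1) / t * (r ^ (γ - (d : ℝ) + 2) * b (2 * Real.arccos (s / r))) :=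
            mul_le_mul_of_nonneg_left
              (mul_le_mul_of_nonneg_left hbl (by positivity)) (by positivity)
    · calc (2 : ℝ) ^ (d - 1) / t * (r ^ (γ - (d : ℝ) + 2) * b (2 * Real.arccos (s / r)))
          ≤ (2 : ℝ) ^ (d - 1) / t * (r ^ (γ - (d : ℝ) + 2)
              * (c₂ * (2 * t * s / r ^ 2) ^ (-(d : ℝ) + 1 - ν))) :=
            mul_le_mul_of_nonneg_left
              (mul_le_mul_of_nonneg_left hbu (by positivity)) (by positivity)
        _ = c₂ * Real.exp (Real.log 2 * ((d : ℝ) - 1) - Real.log t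
              + Real.log r * (γ - (d : ℝ) + 2)
              + (Real.log 2 + Real.log t + Real.log s - 2 * Real.log r) * (-(d : ℝ) + 1 - ν)) :=
            hprod _ _
        _ ≤ c₂ * Real.exp (Real.log 2 * (((d : ℝ) - 1) + (-(d : ℝ) + 1 - ν) + ((d : ℝ) + γ + 2 * ν) / 2)
              + (Real.log s * (1 + γ + ν) + Real.log t * (-(d : ℝ) - ν))) := by
            refine mul_le_mul_of_nonneg_left (Real.exp_le_exp.mpr ?_) hc₂.le
            nlinarith [mul_nonneg (by linarith : (0:ℝ) ≤ ((d : ℝ) + γ + 2 * ν) / 2)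
              (by linarith : (0:ℝ) ≤ Real.log 2 + 2 * Real.log s - 2 * Real.log r)]
        _ = (c₂ * Real.exp (Real.log 2 * (((d : ℝ) - 1) + (-(d : ℝ) + 1 - ν) + ((d : ℝ) + γ + 2 * ν) / 2)))
              * (s ^ (1 + γ + ν) * t ^ (-(d : ℝ) - ν)) := by
            rw [Real.rpow_def_of_pos hs, Real.rpow_def_of_pos ht, ← Real.exp_add, mul_assoc,
              ← Real.exp_add]
        _ ≤ max (c₂ * Real.exp (Real.log 2 * (((d : ℝ) - 1) + (-(d : ℝ) + 1 - ν) + ((d : ℝ) + γ + 2 * ν) / 2)))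
              (c₂ * Real.exp (Real.log 2 * (((d : ℝ) - 1) + (1 + γ + ν))))
              * (s ^ (1 + γ + ν) * t ^ (-(d : ℝ) - ν)) :=
            mul_le_mul_of_nonneg_right (le_max_left _ _) hPnn
  · -- case cos θ < 0, exponent q = 1+γ+ν
    have htr : t < r := by nlinarith
    have hLtLr : Real.log t ≤ Real.log r := Real.log_le_log ht htr.le
    have h2r : 2 * Real.log r ≤ Real.log 2 + 2 * Real.log t := by
      have h1 : Real.log (r ^ 2) ≤ Real.log (2 * t ^ 2) :=
        Real.log_le_log (by positivity) (by nlinarith)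
      rw [Real.log_pow, Real.log_mul (by norm_num) (by positivity), Real.log_pow] at h1
      push_cast at h1
      linarith
    have hcosneg : Real.cos (2 * Real.arccos (s / r)) < 0 := by
      rw [hcos, sub_neg, div_pow, ← mul_div_assoc, div_lt_iff₀ (by positivity)]
      nlinarith
    obtain ⟨hbl, hbu⟩ := hb_neg _ hθ0 hθπ hcosneg
    rw [hsin] at hbl hbu
    constructor
    · calc min (c₁ * Real.exp (Real.log 2 * (((d : ℝ) - 1) + (-(d : ℝ) + 1 - ν))))
            (c₁ * Real.exp (Real.log 2 * (((d : ℝ) - 1) + (1 + γ + ν) - ((d : ℝ) + γ + 2 * ν) / 2)))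
            * (s ^ (1 + γ + ν) * t ^ (-(d : ℝ) - ν))
          ≤ (c₁ * Real.exp (Real.log 2 * (((d : ℝ) - 1) + (1 + γ + ν) - ((d : ℝ) + γ + 2 * ν) / 2)))
            * (s ^ (1 + γ + ν) * t ^ (-(d : ℝ) - ν)) :=
            mul_le_mul_of_nonneg_right (min_le_right _ _) hPnn
        _ = c₁ * Real.exp (Real.log 2 * (((d : ℝ) - 1) + (1 + γ + ν) - ((d : ℝ) + γ + 2 * ν) / 2)
              + (Real.log s * (1 + γ + ν) + Real.log t * (-(d : ℝ) - ν))) := by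
            rw [Real.rpow_def_of_pos hs, Real.rpow_def_of_pos ht, ← Real.exp_add, mul_assoc,
              ← Real.exp_add]
        _ ≤ c₁ * Real.exp (Real.log 2 * ((d : ℝ) - 1) - Real.log t
              + Real.log r * (γ - (d : ℝ) + 2)
              + (Real.log 2 + Real.log t + Real.log s - 2 * Real.log r) * (1 + γ + ν)) := by
            refine mul_le_mul_of_nonneg_left (Real.exp_le_exp.mpr ?_) hc₁.le
            nlinarith [mul_nonneg (by linarith : (0:ℝ) ≤ ((d : ℝ) + γ + 2 * ν) / 2)
              (by linarith : (0:ℝ) ≤ Real.log 2 + 2 * Real.log t - 2 * Real.log r)]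
        _ = (2 : ℝ) ^ (d - 1) / t * (r ^ (γ - (d : ℝ) + 2)
              * (c₁ * (2 * t * s / r ^ 2) ^ (1 + γ + ν))) := (hprod _ _).symm
        _ ≤ (2 : ℝ) ^ (d - 1) / t * (r ^ (γ - (d : ℝ) + 2) * b (2 * Real.arccos (s / r))) :=
            mul_le_mul_of_nonneg_left
              (mul_le_mul_of_nonneg_left hbl (by positivity)) (by positivity)
    · calc (2 : ℝ) ^ (d - 1) / t * (r ^ (γ - (d : ℝ) + 2) * b (2 * Real.arccos (s / r)))
          ≤ (2 : ℝ) ^ (d - 1) / t * (r ^ (γ - (d : ℝ) + 2)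
              * (c₂ * (2 * t * s / r ^ 2) ^ (1 + γ + ν))) :=
            mul_le_mul_of_nonneg_left
              (mul_le_mul_of_nonneg_left hbu (by positivity)) (by positivity)
        _ = c₂ * Real.exp (Real.log 2 * ((d : ℝ) - 1) - Real.log t
              + Real.log r * (γ - (d : ℝ) + 2)
              + (Real.log 2 + Real.log t + Real.log s - 2 * Real.log r) * (1 + γ + ν)) :=
            hprod _ _
        _ ≤ c₂ * Real.exp (Real.log 2 * (((d : ℝ) - 1) + (1 + γ + ν))
              + (Real.log s * (1 + γ + ν) + Real.log t * (-(d : ℝ) - ν))) := by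
            refine mul_le_mul_of_nonneg_left (Real.exp_le_exp.mpr ?_) hc₂.le
            nlinarith [mul_nonneg hm.le (sub_nonneg.mpr hLtLr)]
        _ = (c₂ * Real.exp (Real.log 2 * (((d : ℝ) - 1) + (1 + γ + ν))))
              * (s ^ (1 + γ + ν) * t ^ (-(d : ℝ) - ν)) := by
            rw [Real.rpow_def_of_pos hs, Real.rpow_def_of_pos ht, ← Real.exp_add, mul_assoc,
              ← Real.exp_add]
        _ ≤ max (c₂ * Real.exp (Real.log 2 * (((d : ℝ) - 1) + (-(d : ℝ) + 1 - ν) + ((d : ℝ) + γ + 2 * ν) / 2)))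
              (c₂ * Real.exp (Real.log 2 * (((d : ℝ) - 1) + (1 + γ + ν))))
              * (s ^ (1 + γ + ν) * t ^ (-(d : ℝ) - ν)) :=
            mul_le_mul_of_nonneg_right (le_max_right _ _) hPnn

/-- Pointwise equivalence of the Carleman kernel `K_f` with
`(∫_{w ⊥ v'-v} f(v+w) |w|^{1+γ+ν} dw) |v'-v|^{-d-ν}`. -/
theorem Kf_equivalence
    (d : ℕ) (hd : 2 ≤ d) (γ ν : ℝ) (hγ : 0 < γ ∧ γ ≤ 1) (hν : 0 < ν ∧ ν < 2)
    (b : ℝ → ℝ) (hb_nonneg : ∀ θ, 0 ≤ b θ)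
    (c₁ c₂ : ℝ) (hc₁ : 0 < c₁) (hc₂ : 0 < c₂)
    (hb_pos : ∀ θ : ℝ, 0 < θ → θ < Real.pi → 0 ≤ Real.cos θ →
      c₁ * Real.sin θ ^ (-(d : ℝ) + 1 - ν) ≤ b θ ∧
      b θ ≤ c₂ * Real.sin θ ^ (-(d : ℝ) + 1 - ν))
    (hb_neg : ∀ θ : ℝ, 0 < θ → θ < Real.pi → Real.cos θ < 0 →
      c₁ * Real.sin θ ^ (1 + γ + ν) ≤ b θ ∧
      b θ ≤ c₂ * Real.sin θ ^ (1 + γ + ν)) :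
    ∃ C₁ C₂ : ℝ, 0 < C₁ ∧ 0 < C₂ ∧
      ∀ (f : EuclideanSpace ℝ (Fin d) → ℝ≥0∞), Measurable f →
      ∀ (v v' : EuclideanSpace ℝ (Fin d)), v ≠ v' →
        (ENNReal.ofReal C₁ *
          ((∫⁻ w in {w : EuclideanSpace ℝ (Fin d) | ⟪w, v' - v⟫_ℝ = 0},
              f (v + w) * ENNReal.ofReal (‖w‖ ^ (1 + γ + ν)) ∂(μH[(d : ℝ) - 1])) *
            ENNReal.ofReal (‖v' - v‖ ^ (-(d : ℝ) - ν)))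
        ≤ ENNReal.ofReal ((2:ℝ) ^ (d - 1) / ‖v' - v‖) *
            ∫⁻ w in {w : EuclideanSpace ℝ (Fin d) | ⟪w, v' - v⟫_ℝ = 0},
              f (v + w) *
              ENNReal.ofReal
                (Real.sqrt (‖v' - v‖ ^ 2 + ‖w‖ ^ 2) ^ (γ - (d : ℝ) + 2) *
                 b (2 * Real.arccos (‖w‖ / Real.sqrt (‖v' - v‖ ^ 2 + ‖w‖ ^ 2))))
              ∂(μH[(d : ℝ) - 1]))
        ∧
        (ENNReal.ofReal ((2:ℝ) ^ (d - 1) / ‖v' - v‖) *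
            ∫⁻ w in {w : EuclideanSpace ℝ (Fin d) | ⟪w, v' - v⟫_ℝ = 0},
              f (v + w) *
              ENNReal.ofReal
                (Real.sqrt (‖v' - v‖ ^ 2 + ‖w‖ ^ 2) ^ (γ - (d : ℝ) + 2) *
                 b (2 * Real.arccos (‖w‖ / Real.sqrt (‖v' - v‖ ^ 2 + ‖w‖ ^ 2))))
              ∂(μH[(d : ℝ) - 1])
        ≤ ENNReal.ofReal C₂ *
          ((∫⁻ w in {w : EuclideanSpace ℝ (Fin d) | ⟪w, v' - v⟫_ℝ = 0},
              f (v + w) * ENNReal.ofReal (‖w‖ ^ (1 + γ + ν)) ∂(μH[(d : ℝ) - 1])) *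
            ENNReal.ofReal (‖v' - v‖ ^ (-(d : ℝ) - ν)))) := by
  obtain ⟨hγ0, hγ1⟩ := hγ
  obtain ⟨hν0, hν2⟩ := hν
  refine ⟨min (c₁ * Real.exp (Real.log 2 * (((d : ℝ) - 1) + (-(d : ℝ) + 1 - ν))))
        (c₁ * Real.exp (Real.log 2 * (((d : ℝ) - 1) + (1 + γ + ν) - ((d : ℝ) + γ + 2 * ν) / 2))),
      max (c₂ * Real.exp (Real.log 2 * (((d : ℝ) - 1) + (-(d : ℝ) + 1 - ν) + ((d : ℝ) + γ + 2 * ν) / 2)))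
        (c₂ * Real.exp (Real.log 2 * (((d : ℝ) - 1) + (1 + γ + ν)))),
      lt_min (by positivity) (by positivity),
      lt_max_iff.mpr (Or.inl (by positivity)),
      fun f hf v v' hvv' => ?_⟩
  have hu : v' - v ≠ 0 := sub_ne_zero.mpr (Ne.symm hvv')
  have ht : (0 : ℝ) < ‖v' - v‖ := norm_pos_iff.mpr hu
  have hμ0 : (μH[(d : ℝ) - 1] : Measure (EuclideanSpace ℝ (Fin d))) {0} = 0 := by
    have hpos : (0 : ℝ) < (d : ℝ) - 1 := by
      have : (2 : ℝ) ≤ (d : ℝ) := by exact_mod_cast hd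
      linarith
    haveI := MeasureTheory.Measure.noAtoms_hausdorff (EuclideanSpace ℝ (Fin d)) hpos
    exact measure_singleton 0
  have hae : ∀ᵐ w ∂((μH[(d : ℝ) - 1] :
      Measure (EuclideanSpace ℝ (Fin d))).restrict
        {w : EuclideanSpace ℝ (Fin d) | ⟪w, v' - v⟫_ℝ = 0}), w ≠ 0 := by
    refine MeasureTheory.ae_iff.mpr ?_
    have hsub : {w : EuclideanSpace ℝ (Fin d) | ¬ w ≠ 0} = {(0 : EuclideanSpace ℝ (Fin d))} := by
      ext w; simp
    rw [hsub]
    exact le_antisymm (le_trans (Measure.restrict_apply_le _ _) hμ0.le) zero_le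
  have hTnn : (0 : ℝ) ≤ ‖v' - v‖ ^ (-(d : ℝ) - ν) := Real.rpow_nonneg (norm_nonneg _) _
  have key : ∀ C : ℝ, 0 ≤ C →
      ENNReal.ofReal C *
        ((∫⁻ w in {w : EuclideanSpace ℝ (Fin d) | ⟪w, v' - v⟫_ℝ = 0},
            f (v + w) * ENNReal.ofReal (‖w‖ ^ (1 + γ + ν)) ∂(μH[(d : ℝ) - 1])) *
          ENNReal.ofReal (‖v' - v‖ ^ (-(d : ℝ) - ν)))
      = ∫⁻ w in {w : EuclideanSpace ℝ (Fin d) | ⟪w, v' - v⟫_ℝ = 0},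
          f (v + w) *
            ENNReal.ofReal (C * (‖w‖ ^ (1 + γ + ν) * ‖v' - v‖ ^ (-(d : ℝ) - ν)))
          ∂(μH[(d : ℝ) - 1]) := by
    intro C hC
    calc ENNReal.ofReal C *
        ((∫⁻ w in {w : EuclideanSpace ℝ (Fin d) | ⟪w, v' - v⟫_ℝ = 0},
            f (v + w) * ENNReal.ofReal (‖w‖ ^ (1 + γ + ν)) ∂(μH[(d : ℝ) - 1])) *
          ENNReal.ofReal (‖v' - v‖ ^ (-(d : ℝ) - ν)))
        = ENNReal.ofReal (C * ‖v' - v‖ ^ (-(d : ℝ) - ν)) *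
            ∫⁻ w in {w : EuclideanSpace ℝ (Fin d) | ⟪w, v' - v⟫_ℝ = 0},
              f (v + w) * ENNReal.ofReal (‖w‖ ^ (1 + γ + ν)) ∂(μH[(d : ℝ) - 1]) := by
          rw [ENNReal.ofReal_mul hC]; ring
      _ = ∫⁻ w in {w : EuclideanSpace ℝ (Fin d) | ⟪w, v' - v⟫_ℝ = 0},
            ENNReal.ofReal (C * ‖v' - v‖ ^ (-(d : ℝ) - ν)) *
              (f (v + w) * ENNReal.ofReal (‖w‖ ^ (1 + γ + ν))) ∂(μH[(d : ℝ) - 1]) :=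
          (lintegral_const_mul' _ _ ENNReal.ofReal_ne_top).symm
      _ = _ := by
          refine lintegral_congr fun w => ?_
          have h1 : C * (‖w‖ ^ (1 + γ + ν) * ‖v' - v‖ ^ (-(d : ℝ) - ν))
              = (C * ‖v' - v‖ ^ (-(d : ℝ) - ν)) * ‖w‖ ^ (1 + γ + ν) := by ring
          rw [h1, ENNReal.ofReal_mul (mul_nonneg hC hTnn)]
          ring
  have keyG :
      ENNReal.ofReal ((2 : ℝ) ^ (d - 1) / ‖v' - v‖) *
        (∫⁻ w in {w : EuclideanSpace ℝ (Fin d) | ⟪w, v' - v⟫_ℝ = 0},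
          f (v + w) *
            ENNReal.ofReal
              (Real.sqrt (‖v' - v‖ ^ 2 + ‖w‖ ^ 2) ^ (γ - (d : ℝ) + 2) *
               b (2 * Real.arccos (‖w‖ / Real.sqrt (‖v' - v‖ ^ 2 + ‖w‖ ^ 2))))
          ∂(μH[(d : ℝ) - 1]))
      = ∫⁻ w in {w : EuclideanSpace ℝ (Fin d) | ⟪w, v' - v⟫_ℝ = 0},
          f (v + w) *
            ENNReal.ofReal ((2 : ℝ) ^ (d - 1) / ‖v' - v‖ *
              (Real.sqrt (‖v' - v‖ ^ 2 + ‖w‖ ^ 2) ^ (γ - (d : ℝ) + 2) *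
               b (2 * Real.arccos (‖w‖ / Real.sqrt (‖v' - v‖ ^ 2 + ‖w‖ ^ 2)))))
          ∂(μH[(d : ℝ) - 1]) := by
    rw [← lintegral_const_mul' _ _ ENNReal.ofReal_ne_top]
    refine lintegral_congr fun w => ?_
    conv_rhs => rw [ENNReal.ofReal_mul (by positivity : (0:ℝ) ≤ (2 : ℝ) ^ (d - 1) / ‖v' - v‖)]
    ring
  constructor
  · rw [key _ (le_of_lt (lt_min (by positivity) (by positivity))), keyG]
    refine lintegral_mono_ae (hae.mono fun w hw => ?_)
    refine mul_le_mul_right (ENNReal.ofReal_le_ofReal ?_) _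
    exact (core_ineq d hd γ ν hγ0 hν0 b c₁ c₂ hc₁ hc₂ hb_pos hb_neg ‖w‖ ‖v' - v‖
      (norm_pos_iff.mpr hw) ht).1
  · rw [key _ (le_of_lt (lt_max_iff.mpr (Or.inl (by positivity)))), keyG]
    refine lintegral_mono_ae (hae.mono fun w hw => ?_)
    refine mul_le_mul_right (ENNReal.ofReal_le_ofReal ?_) _
    exact (core_ineq d hd γ ν hγ0 hν0 b c₁ c₂ hc₁ hc₂ hb_pos hb_neg ‖w‖ ‖v' - v‖
      (norm_pos_iff.mpr hw) ht).2
end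
end

section
/- Let d ≥ 2 and ν > 0. Let m̃ > 0 and let g : ℝ^d → ℝ be a measurable function with 0 ≤ g(v') ≤ m̃ for all v' ∈ ℝ^d. Let ṽ ∈ ℝ^d, let A ⊆ S^{d−1} satisfy H^{d−1}(A) ≥ μ for some μ > 0, and let 𝒞 = {v' ∈ ℝ^d : v' ≠ ṽ and (v'−ṽ)/|v'−ṽ| ∈ A} be the associated cone centered at ṽ. Assume 0 < ∫_{𝒞} g(v') dv' < ∞. Then there exists a constant c > 0, depending only on d and ν, such that ∫_{𝒞} (m̃ − g(v')) |ṽ − v'|^{−d−ν} dv' ≥ c · m̃^{1+ν/d} · μ^{1+ν/d} / (∫_{𝒞} g(v') dv')^{ν/d}. -/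
open MeasureTheory
open scoped ENNReal InnerProductSpace

noncomputable section

open Set
open scoped NNReal


lemma ediam_image_le_of_lipschitzOn {X Y : Type*} [PseudoEMetricSpace X] [PseudoEMetricSpace Y]
    {K : ℝ≥0} {f : X → Y} {S u : Set X} (h : LipschitzOnWith K f S) (hu : u ⊆ S) :
    EMetric.diam (f '' u) ≤ K * EMetric.diam u := by
  apply EMetric.diam_le
  rintro _ ⟨x, hx, rfl⟩ _ ⟨y, hy, rfl⟩
  exact (h (hu hx) (hu hy)).trans (mul_le_mul_right (EMetric.edist_le_diam_of_mem hx hy) K)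

/-- Slicing lower bound for Hausdorff measure. -/
lemma slicing {X : Type*} [MetricSpace X] [MeasurableSpace X] [BorelSpace X]
    (s : ℝ) (hs : 0 < s) (K : ℝ≥0) (hK : 0 < K)
    (p : X → X) (q : X → ℝ) (S A : Set X) (a b : ℝ)
    (hp : LipschitzOnWith K p S) (hq : LipschitzOnWith 1 q S)
    (hcov : ∀ t ∈ Set.Icc a b, A ⊆ p '' (S ∩ q ⁻¹' {t})) :
    ENNReal.ofReal (b - a) * μH[s] A ≤ 2 * (K : ℝ≥0∞) ^ s * μH[s + 1] S := by
  classical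
  have hc0 : (2 : ℝ≥0∞) * (K : ℝ≥0∞) ^ s ≠ 0 := by
    simp [ENNReal.rpow_eq_zero_iff, hK.ne', hs, hs.le]
  have hctop : (2 : ℝ≥0∞) * (K : ℝ≥0∞) ^ s ≠ ⊤ := by
    simp [ENNReal.mul_eq_top, ENNReal.rpow_eq_top_iff, hs, hs.not_gt]
  conv_lhs => rw [Measure.hausdorffMeasure_apply]
  simp only [ENNReal.mul_iSup]
  refine iSup₂_le fun r hr => ?_
  set δ : ℝ≥0∞ := min r 1 / K with hδdef
  have hδpos : 0 < δ := ENNReal.div_pos (by simp [hr.ne', lt_min hr zero_lt_one, (lt_min hr zero_lt_one).ne']) ENNReal.coe_ne_top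
  have hδlt : δ < ⊤ := lt_of_le_of_lt (ENNReal.div_le_div_right (min_le_right _ _) _)
      (by
        rw [lt_top_iff_ne_top]
        simp [ENNReal.div_eq_top, hK.ne'])
  -- lower bound for μH[s+1] S at scale δ
  have hS : (⨅ (t : ℕ → Set X) (_ : S ⊆ ⋃ n, t n) (_ : ∀ n, EMetric.diam (t n) ≤ δ),
      ∑' n, ⨆ _ : (t n).Nonempty, EMetric.diam (t n) ^ (s+1)) ≤ μH[s+1] S := by
    rw [Measure.hausdorffMeasure_apply]
    exact le_iSup₂ (f := fun r' (_ : 0 < r') => ⨅ (t : ℕ → Set X) (_ : S ⊆ ⋃ n, t n)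
      (_ : ∀ n, EMetric.diam (t n) ≤ r'), ∑' n, ⨆ _ : (t n).Nonempty, EMetric.diam (t n) ^ (s+1))
      δ hδpos
  refine le_trans ?_ (mul_le_mul_right hS _)
  rw [ENNReal.mul_iInf_of_ne hc0 hctop]
  refine le_iInf fun t => ?_
  rw [ENNReal.mul_iInf_of_ne hc0 hctop]
  refine le_iInf fun hcover => ?_
  rw [ENNReal.mul_iInf_of_ne hc0 hctop]
  refine le_iInf fun hdiam => ?_
  -- the cover of `S`, intersected with `S`
  set t' : ℕ → Set X := fun n => t n ∩ S with ht'
  have ht'S : ∀ n, t' n ⊆ S := fun n => inter_subset_right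
  have ht'mono : ∀ n, EMetric.diam (t' n) ≤ EMetric.diam (t n) :=
    fun n => EMetric.diam_mono inter_subset_left
  have hDlt : ∀ n, EMetric.diam (t' n) < ⊤ :=
    fun n => lt_of_le_of_lt (le_trans (ht'mono n) (hdiam n)) hδlt
  set D : ℕ → ℝ := fun n => (EMetric.diam (t' n)).toReal with hD
  set J : ℕ → Set ℝ := fun n => if h : (t' n).Nonempty
    then Icc (q h.choose - D n) (q h.choose + D n) else ∅ with hJ
  have hJmeas : ∀ n, MeasurableSet (J n) := by
    intro n
    by_cases h : (t' n).Nonempty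
    · simp only [hJ, dif_pos h]; exact measurableSet_Icc
    · simp only [hJ, dif_neg h]; exact MeasurableSet.empty
  have hmemJ : ∀ n, ∀ w ∈ t' n, q w ∈ J n := by
    intro n w hw
    have hne : (t' n).Nonempty := ⟨w, hw⟩
    have hc : hne.choose ∈ t' n := hne.choose_spec
    have h1 : edist (q w) (q hne.choose) ≤ EMetric.diam (t' n) := by
      refine le_trans (hq (ht'S n hw) (ht'S n hc)) ?_
      simpa [EMetric.diam] using EMetric.edist_le_diam_of_mem hw hc
    have h2 : dist (q w) (q hne.choose) ≤ D n := by
      rw [dist_edist]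
      exact ENNReal.toReal_mono (hDlt n).ne h1
    rw [Real.dist_eq, abs_le] at h2
    simp only [hJ, dif_pos hne, mem_Icc]
    exact ⟨by linarith [h2.2], by linarith [h2.1]⟩
  -- covering property of A for each slice
  have hAcov : ∀ τ ∈ Icc a b, A ⊆ ⋃ n, (if τ ∈ J n then p '' t' n else ∅) := by
    intro τ hτ x hx
    obtain ⟨w, ⟨hwS, hwq⟩, hpw⟩ := hcov τ hτ hx
    obtain ⟨n, hn⟩ := mem_iUnion.1 (hcover hwS)
    have hwt' : w ∈ t' n := ⟨hn, hwS⟩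
    have hτJ : τ ∈ J n := by
      have := hmemJ n w hwt'
      rwa [show q w = τ from hwq] at this
    exact mem_iUnion.2 ⟨n, by rw [if_pos hτJ]; exact ⟨w, hwt', hpw⟩⟩
  have hdiamJ : ∀ τ : ℝ, ∀ n, EMetric.diam (if τ ∈ J n then p '' t' n else ∅) ≤ r := by
    intro τ n
    by_cases h : τ ∈ J n
    · rw [if_pos h]
      refine le_trans (ediam_image_le_of_lipschitzOn hp (ht'S n)) ?_
      calc (K:ℝ≥0∞) * EMetric.diam (t' n) ≤ (K:ℝ≥0∞) * δ :=
            mul_le_mul_right (le_trans (ht'mono n) (hdiam n)) _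
        _ = min r 1 := ENNReal.mul_div_cancel' (fun h => absurd h (by exact_mod_cast hK.ne')) (fun h => absurd h ENNReal.coe_ne_top)
        _ ≤ r := min_le_left _ _
    · rw [if_neg h]; simp [EMetric.diam]
  have hinf : ∀ τ ∈ Icc a b,
      (⨅ (u : ℕ → Set X) (_ : A ⊆ ⋃ n, u n) (_ : ∀ n, EMetric.diam (u n) ≤ r),
        ∑' n, ⨆ _ : (u n).Nonempty, EMetric.diam (u n) ^ s)
      ≤ ∑' n, (J n).indicator (fun _ => ((K:ℝ≥0∞) * EMetric.diam (t n)) ^ s) τ := by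
    intro τ hτ
    refine le_trans (iInf_le_of_le (fun n => if τ ∈ J n then p '' t' n else ∅)
      (iInf_le_of_le (hAcov τ hτ) (iInf_le_of_le (hdiamJ τ) le_rfl))) ?_
    refine ENNReal.tsum_le_tsum fun n => ?_
    beta_reduce
    by_cases hmem : τ ∈ J n
    · rw [if_pos hmem, indicator_of_mem hmem]
      refine iSup_le fun _ => ?_
      refine ENNReal.rpow_le_rpow ?_ hs.le
      exact le_trans (ediam_image_le_of_lipschitzOn hp (ht'S n))
        (mul_le_mul_right (ht'mono n) _)
    · rw [if_neg hmem, indicator_of_notMem hmem]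
      simp [Set.not_nonempty_empty]
  calc ENNReal.ofReal (b - a) *
      (⨅ (u : ℕ → Set X) (_ : A ⊆ ⋃ n, u n) (_ : ∀ n, EMetric.diam (u n) ≤ r),
        ∑' n, ⨆ _ : (u n).Nonempty, EMetric.diam (u n) ^ s)
      = ∫⁻ _ in Icc a b,
        (⨅ (u : ℕ → Set X) (_ : A ⊆ ⋃ n, u n) (_ : ∀ n, EMetric.diam (u n) ≤ r),
          ∑' n, ⨆ _ : (u n).Nonempty, EMetric.diam (u n) ^ s) := by
        rw [setLIntegral_const, Real.volume_Icc, mul_comm]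
    _ ≤ ∫⁻ τ in Icc a b,
        ∑' n, (J n).indicator (fun _ => ((K:ℝ≥0∞) * EMetric.diam (t n)) ^ s) τ :=
        setLIntegral_mono
          (Measurable.ennreal_tsum fun n => measurable_const.indicator (hJmeas n)) hinf
    _ = ∑' n, ((K:ℝ≥0∞) * EMetric.diam (t n)) ^ s * volume (J n ∩ Icc a b) := by
        rw [lintegral_tsum fun n => (measurable_const.indicator (hJmeas n)).aemeasurable]
        refine tsum_congr fun n => ?_
        rw [lintegral_indicator (hJmeas n), setLIntegral_const, Measure.restrict_apply (hJmeas n)]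
    _ ≤ ∑' n, 2 * (K:ℝ≥0∞) ^ s * (⨆ _ : (t n).Nonempty, EMetric.diam (t n) ^ (s+1)) := by
        refine ENNReal.tsum_le_tsum fun n => ?_
        by_cases hne : (t' n).Nonempty
        · have htn : (t n).Nonempty := hne.mono inter_subset_left
          rw [iSup_pos htn]
          have hvol : volume (J n ∩ Icc a b) ≤ 2 * EMetric.diam (t' n) := by
            refine le_trans (measure_mono inter_subset_left) ?_
            simp only [hJ, dif_pos hne, Real.volume_Icc]
            have : q hne.choose + D n - (q hne.choose - D n) = 2 * D n := by ring
            rw [this, ENNReal.ofReal_mul (by norm_num), ENNReal.ofReal_ofNat,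
              ENNReal.ofReal_toReal (hDlt n).ne]
          calc ((K:ℝ≥0∞) * EMetric.diam (t n)) ^ s * volume (J n ∩ Icc a b)
              ≤ ((K:ℝ≥0∞) * EMetric.diam (t n)) ^ s * (2 * EMetric.diam (t n)) :=
                mul_le_mul_right (hvol.trans (mul_le_mul_right (ht'mono n) _)) _
            _ = 2 * (K:ℝ≥0∞) ^ s * (EMetric.diam (t n) ^ s * EMetric.diam (t n)) := by
                rw [ENNReal.mul_rpow_of_nonneg _ _ hs.le]; ring
            _ = 2 * (K:ℝ≥0∞) ^ s * EMetric.diam (t n) ^ (s+1) := by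
                rw [ENNReal.rpow_add_of_nonneg s 1 hs.le zero_le_one, ENNReal.rpow_one]
        · have : J n = ∅ := by simp only [hJ, dif_neg hne]
          rw [this, empty_inter, measure_empty, mul_zero]
          exact zero_le
    _ = 2 * (K:ℝ≥0∞) ^ s * ∑' n, ⨆ _ : (t n).Nonempty, EMetric.diam (t n) ^ (s+1) :=
        ENNReal.tsum_mul_left

/-- On Euclidean space, `d`-dimensional Hausdorff measure is at most `d^(d/2)` times volume. -/
lemma hausdorff_le_volume (d : ℕ) (hd : 1 ≤ d) (S : Set (EuclideanSpace ℝ (Fin d))) :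
    μH[(d : ℝ)] S ≤ ((d : ℝ≥0∞) ^ ((d : ℝ)/2)) * volume S := by
  have hdne : (d : ℝ≥0∞) ≠ 0 := by
    simp; omega
  have hC0 : ((d : ℝ≥0∞) ^ ((d : ℝ)/2)) ≠ 0 := by
    simp [ENNReal.rpow_eq_zero_iff, hdne]
  have hCtop : ((d : ℝ≥0∞) ^ ((d : ℝ)/2)) ≠ ⊤ := by
    simp [ENNReal.rpow_eq_top_iff, hdne]
  -- Lipschitz map from the sup-norm pi space to Euclidean space
  have hlip : LipschitzWith ((d : ℝ≥0) ^ ((1:ℝ)/2))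
      ((WithLp.equiv 2 (Fin d → ℝ)).symm) := by
    have h1 := PiLp.antilipschitzWith_ofLp 2 (fun _ : Fin d => ℝ)
    have h2 : ((Fintype.card (Fin d) : ℝ≥0) ^ ((1 / (2:ℝ≥0∞)).toReal))
        = (d : ℝ≥0) ^ ((1:ℝ)/2) := by
      norm_num
    rw [h2] at h1
    exact h1.to_rightInverse (WithLp.equiv 2 (Fin d → ℝ)).apply_symm_apply
  -- first, for measurable sets
  have key : ∀ T : Set (EuclideanSpace ℝ (Fin d)), MeasurableSet T →
      μH[(d : ℝ)] T ≤ ((d : ℝ≥0∞) ^ ((d : ℝ)/2)) * volume T := by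
    intro T hT
    have himg : T = (WithLp.equiv 2 (Fin d → ℝ)).symm '' ((WithLp.equiv 2 (Fin d → ℝ)) '' T) := by
      simp [Set.image_image]
    calc μH[(d : ℝ)] T
        ≤ (((d : ℝ≥0) ^ ((1:ℝ)/2) : ℝ≥0) : ℝ≥0∞) ^ (d : ℝ) *
          μH[(d : ℝ)] ((WithLp.equiv 2 (Fin d → ℝ)) '' T) := by
          conv_lhs => rw [himg]
          exact hlip.hausdorffMeasure_image_le (by positivity) _
      _ = ((d : ℝ≥0∞) ^ ((d : ℝ)/2)) * volume T := by
          congr 1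
          · rw [ENNReal.coe_rpow_of_nonneg _ (by norm_num : (0:ℝ) ≤ 1/2),
              ← ENNReal.rpow_mul]
            norm_num
            ring_nf
          · have h3 : (μH[(Fintype.card (Fin d) : ℝ)] : Measure (Fin d → ℝ)) = volume := by
              exact_mod_cast MeasureTheory.hausdorffMeasure_pi_real
            have hcard : ((Fintype.card (Fin d) : ℝ)) = (d : ℝ) := by simp
            rw [hcard] at h3
            rw [h3]
            have himgpre : (WithLp.equiv 2 (Fin d → ℝ)) '' T
                = (MeasurableEquiv.toLp 2 (Fin d → ℝ)).symm.symm ⁻¹' T := by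
              rw [Equiv.image_eq_preimage_symm]
              rfl
            rw [himgpre,
              (MeasurePreserving.symm _
                (EuclideanSpace.volume_preserving_symm_measurableEquiv_toLp (Fin d))).measure_preimage
                hT.nullMeasurableSet]
  -- general sets by outer regularity of volume
  conv_rhs => rw [measure_eq_iInf S]
  rw [ENNReal.mul_iInf_of_ne hC0 hCtop]
  refine le_iInf fun T => ?_
  rw [ENNReal.mul_iInf_of_ne hC0 hCtop]
  refine le_iInf fun hST => ?_
  rw [ENNReal.mul_iInf_of_ne hC0 hCtop]
  refine le_iInf fun hT => ?_
  exact le_trans (measure_mono hST) (key T hT)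

lemma lipschitzOnWith_normalize {E : Type*} [NormedAddCommGroup E] [NormedSpace ℝ E]
    (ρ : ℝ) (hρ : 0 < ρ) (vt : E) :
    LipschitzOnWith (Real.toNNReal (2/ρ)) (fun v => ‖v - vt‖⁻¹ • (v - vt))
      {v : E | ρ ≤ ‖v - vt‖} := by
  rw [lipschitzOnWith_iff_dist_le_mul]
  intro v hv w hw
  simp only [mem_setOf_eq] at hv hw
  set x := v - vt with hxd
  set y := w - vt with hyd
  have hx : (0:ℝ) < ‖x‖ := lt_of_lt_of_le hρ hv
  have hy : (0:ℝ) < ‖y‖ := lt_of_lt_of_le hρ hw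
  have hsplit : ‖x‖⁻¹ • x - ‖y‖⁻¹ • y = ‖x‖⁻¹ • (x - y) + (‖x‖⁻¹ - ‖y‖⁻¹) • y := by
    module
  have hdistvw : dist v w = ‖x - y‖ := by
    rw [dist_eq_norm, hxd, hyd]; congr 1; abel
  have h1 : dist (‖x‖⁻¹ • x) (‖y‖⁻¹ • y) ≤ ‖x‖⁻¹ * ‖x - y‖ + |‖x‖⁻¹ - ‖y‖⁻¹| * ‖y‖ := by
    rw [dist_eq_norm, hsplit]
    refine (norm_add_le _ _).trans ?_
    rw [norm_smul, norm_smul, Real.norm_eq_abs, Real.norm_eq_abs, abs_of_pos (inv_pos.2 hx)]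
  have habs : |‖y‖ - ‖x‖| ≤ ‖x - y‖ := by
    rw [norm_sub_rev x y]
    exact abs_norm_sub_norm_le y x
  have h2 : |‖x‖⁻¹ - ‖y‖⁻¹| * ‖y‖ ≤ ‖x - y‖ / ρ := by
    rw [inv_sub_inv hx.ne' hy.ne', abs_div, abs_of_pos (mul_pos hx hy),
      div_mul_eq_mul_div]
    have : |‖y‖ - ‖x‖| * ‖y‖ / (‖x‖ * ‖y‖) = |‖y‖ - ‖x‖| / ‖x‖ := by
      field_simp
    rw [this]
    exact div_le_div₀ (norm_nonneg _) habs hρ hv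
  have h3 : ‖x‖⁻¹ * ‖x - y‖ ≤ ‖x - y‖ / ρ := by
    rw [inv_mul_eq_div]
    exact div_le_div₀ (norm_nonneg _) le_rfl hρ hv
  have hcoe : ((Real.toNNReal (2/ρ) : ℝ≥0) : ℝ) = 2/ρ :=
    Real.coe_toNNReal _ (by positivity)
  calc dist (‖x‖⁻¹ • x) (‖y‖⁻¹ • y) ≤ ‖x - y‖ / ρ + ‖x - y‖ / ρ := by linarith
    _ = (2/ρ) * ‖x - y‖ := by ring
    _ = (Real.toNNReal (2/ρ) : ℝ) * dist v w := by rw [hcoe, hdistvw]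

lemma sector_volume (d : ℕ) (hd : 2 ≤ d)
    (vt : EuclideanSpace ℝ (Fin d)) (A : Set (EuclideanSpace ℝ (Fin d)))
    (μ : ℝ) (hμ : 0 < μ)
    (hA : A ⊆ Metric.sphere (0 : EuclideanSpace ℝ (Fin d)) 1)
    (hAμ : ENNReal.ofReal μ ≤ μH[(d : ℝ) - 1] A)
    (C : Set (EuclideanSpace ℝ (Fin d)))
    (hC : C = {v' : EuclideanSpace ℝ (Fin d) | v' ≠ vt ∧ ‖v' - vt‖⁻¹ • (v' - vt) ∈ A})
    (ρ : ℝ) (hρ : 0 < ρ) :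
    ENNReal.ofReal (μ * ρ ^ (d:ℝ) / (2 ^ (d:ℝ) * (d:ℝ) ^ ((d:ℝ)/2)))
      ≤ volume ({v : EuclideanSpace ℝ (Fin d) | ‖v - vt‖ ∈ Icc ρ (2*ρ)} ∩ C) := by
  have hd1 : (1:ℕ) ≤ d := le_trans (by norm_num) hd
  have hdR : (0:ℝ) < d := by positivity
  set S : Set (EuclideanSpace ℝ (Fin d)) :=
    {v : EuclideanSpace ℝ (Fin d) | ‖v - vt‖ ∈ Icc ρ (2*ρ)} ∩ C with hS
  set s : ℝ := (d : ℝ) - 1 with hsdef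
  have hs : 0 < s := by
    rw [hsdef]
    have : (2:ℝ) ≤ d := by exact_mod_cast hd
    linarith
  set K : ℝ≥0 := Real.toNNReal (2/ρ) with hK
  have hKpos : 0 < K := by
    rw [hK]
    apply Real.toNNReal_pos.2
    positivity
  have hp : LipschitzOnWith K (fun v => ‖v - vt‖⁻¹ • (v - vt)) S :=
    (lipschitzOnWith_normalize ρ hρ vt).mono
      (fun v hv => hv.1.1)
  have hq : LipschitzOnWith 1 (fun v => ‖v - vt‖) S := by
    rw [lipschitzOnWith_iff_dist_le_mul]
    intro v _ w _
    rw [Real.dist_eq, NNReal.coe_one, one_mul, dist_eq_norm]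
    refine le_trans (abs_norm_sub_norm_le _ _) ?_
    have : v - vt - (w - vt) = v - w := by abel
    rw [this]
  have hcov : ∀ t ∈ Icc ρ (2*ρ),
      A ⊆ (fun v => ‖v - vt‖⁻¹ • (v - vt)) '' (S ∩ (fun v => ‖v - vt‖) ⁻¹' {t}) := by
    intro t ht θ hθ
    have htpos : 0 < t := lt_of_lt_of_le hρ ht.1
    have hθn : ‖θ‖ = 1 := by
      have := hA hθ
      simpa using this
    have hwne : vt + t • θ - vt = t • θ := by abel
    have hwnorm : ‖vt + t • θ - vt‖ = t := by
      rw [hwne, norm_smul, Real.norm_eq_abs, abs_of_pos htpos, hθn, mul_one]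
    refine ⟨vt + t • θ, ⟨⟨?_, ?_⟩, ?_⟩, ?_⟩
    · rw [mem_setOf_eq, hwnorm]; exact ht
    · rw [hC, mem_setOf_eq]
      constructor
      · intro hcontra
        apply absurd hwnorm
        rw [hcontra]
        simp
        positivity
      · rw [hwnorm, hwne, smul_smul, inv_mul_cancel₀ htpos.ne', one_smul]
        exact hθ
    · rw [mem_preimage, mem_singleton_iff]
      exact hwnorm
    · simp only
      rw [hwnorm, hwne, smul_smul, inv_mul_cancel₀ htpos.ne', one_smul]
  have hslice := slicing s hs K hKpos _ _ S A ρ (2*ρ) hp hq hcov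
  have hs1 : s + 1 = (d:ℝ) := by rw [hsdef]; ring
  rw [hs1] at hslice
  have hvol := hausdorff_le_volume d hd1 S
  have hchain : ENNReal.ofReal ρ * ENNReal.ofReal μ
      ≤ (2 * (K:ℝ≥0∞) ^ s * ((d : ℝ≥0∞) ^ ((d : ℝ)/2))) * volume S := by
    calc ENNReal.ofReal ρ * ENNReal.ofReal μ
        ≤ ENNReal.ofReal ρ * μH[(d : ℝ) - 1] A := mul_le_mul_right hAμ _
      _ = ENNReal.ofReal (2*ρ - ρ) * μH[s] A := by rw [hsdef, show 2*ρ - ρ = ρ by ring]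
      _ ≤ 2 * (K:ℝ≥0∞) ^ s * μH[(d:ℝ)] S := hslice
      _ ≤ 2 * (K:ℝ≥0∞) ^ s * (((d : ℝ≥0∞) ^ ((d : ℝ)/2)) * volume S) :=
          mul_le_mul_right hvol _
      _ = (2 * (K:ℝ≥0∞) ^ s * ((d : ℝ≥0∞) ^ ((d : ℝ)/2))) * volume S := by ring
  -- rewrite the constant as ofReal of a real number
  have hKcoe : ((K:ℝ≥0∞)) = ENNReal.ofReal (2/ρ) := rfl
  set β : ℝ := 2 * (2/ρ) ^ s * (d:ℝ) ^ ((d:ℝ)/2) with hβ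
  have hβpos : 0 < β := by rw [hβ]; positivity
  have hcst : ENNReal.ofReal β = 2 * (K:ℝ≥0∞) ^ s * ((d : ℝ≥0∞) ^ ((d : ℝ)/2)) := by
    rw [hβ, ENNReal.ofReal_mul (by positivity), ENNReal.ofReal_mul (by norm_num : (0:ℝ) ≤ 2),
      ← ENNReal.ofReal_rpow_of_pos (by positivity : (0:ℝ) < 2/ρ),
      ← ENNReal.ofReal_rpow_of_pos hdR, ENNReal.ofReal_natCast, ENNReal.ofReal_ofNat, hKcoe]
  have hchain2 : ENNReal.ofReal (ρ * μ) ≤ volume S * ENNReal.ofReal β := by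
    rw [ENNReal.ofReal_mul hρ.le, hcst]
    exact hchain.trans_eq (mul_comm _ _)
  -- cancel
  have hmain : ENNReal.ofReal (μ * ρ ^ (d:ℝ) / (2 ^ (d:ℝ) * (d:ℝ) ^ ((d:ℝ)/2)))
      * ENNReal.ofReal β ≤ volume S * ENNReal.ofReal β := by
    rw [← ENNReal.ofReal_mul (by positivity)]
    have heq : μ * ρ ^ (d:ℝ) / (2 ^ (d:ℝ) * (d:ℝ) ^ ((d:ℝ)/2)) * β = ρ * μ := by
      rw [hβ, hsdef]
      have e1 : (2:ℝ) ^ (d:ℝ) = 2 * 2 ^ ((d:ℝ) - 1) := by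
        rw [← Real.rpow_one_add' (by norm_num) (by intro h; apply hs.ne'; rw [hsdef]; linarith)]
        norm_num
      have e2 : ρ ^ (d:ℝ) = ρ * ρ ^ ((d:ℝ) - 1) := by
        rw [← Real.rpow_one_add' hρ.le (by intro h; apply hs.ne'; rw [hsdef]; linarith)]
        norm_num
      have e3 : (2/ρ) ^ ((d:ℝ) - 1) = 2 ^ ((d:ℝ)-1) / ρ ^ ((d:ℝ)-1) :=
        Real.div_rpow (by norm_num) (by positivity) _
      rw [e1, e2, e3]
      have h2pos : (0:ℝ) < 2 ^ ((d:ℝ)-1) := by positivity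
      have hρpos : (0:ℝ) < ρ ^ ((d:ℝ)-1) := by positivity
      have hdpos : (0:ℝ) < (d:ℝ) ^ ((d:ℝ)/2) := by positivity
      field_simp
    rw [heq]
    exact hchain2
  exact (ENNReal.mul_le_mul_iff_left (ENNReal.ofReal_pos.2 hβpos).ne'
    ENNReal.ofReal_ne_top).1 hmain


/-- Lower bound for the cone integral (Lemma 7.2 of Silvestre). -/
theorem cone_integral_lower_bound
    (d : ℕ) (hd : 2 ≤ d) (ν : ℝ) (hν : 0 < ν) :
    ∃ c : ℝ, 0 < c ∧
      ∀ (mt : ℝ), 0 < mt →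
      ∀ g : EuclideanSpace ℝ (Fin d) → ℝ, Measurable g →
        (∀ v', 0 ≤ g v') → (∀ v', g v' ≤ mt) →
      ∀ (vt : EuclideanSpace ℝ (Fin d)) (A : Set (EuclideanSpace ℝ (Fin d)))
        (μ : ℝ), 0 < μ →
        A ⊆ Metric.sphere (0 : EuclideanSpace ℝ (Fin d)) 1 →
        ENNReal.ofReal μ ≤ μH[(d : ℝ) - 1] A →
        ∀ C : Set (EuclideanSpace ℝ (Fin d)),
          C = {v' : EuclideanSpace ℝ (Fin d) |
                v' ≠ vt ∧ ‖v' - vt‖⁻¹ • (v' - vt) ∈ A} →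
          IntegrableOn g C →
          0 < (∫ v' in C, g v') →
          ENNReal.ofReal
              (c * mt ^ (1 + ν / d) * μ ^ (1 + ν / d) /
                (∫ v' in C, g v') ^ (ν / (d : ℝ))) ≤
            ∫⁻ v' in C,
              ENNReal.ofReal ((mt - g v') * ‖vt - v'‖ ^ (-(d : ℝ) - ν)) := by
  have hdR : (0:ℝ) < d := by positivity
  have hdne : (d:ℝ) ≠ 0 := hdR.ne'
  set κ : ℝ := (2 ^ (d:ℝ) * (d:ℝ) ^ ((d:ℝ)/2))⁻¹ with hκ
  have hκpos : 0 < κ := by rw [hκ]; positivity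
  set c : ℝ := 2 ^ (-(d:ℝ) - ν - 1) * κ * (κ/2) ^ (ν/(d:ℝ)) with hc
  have hcpos : 0 < c := by rw [hc]; positivity
  refine ⟨c, hcpos, ?_⟩
  intro mt hmt g hgmeas hg0 hg1 vt A μ hμ hA hAμ C hC hgInt hI
  set I : ℝ := ∫ v' in C, g v' with hIdef
  set ρ : ℝ := (2*I/(κ*mt*μ)) ^ ((1:ℝ)/(d:ℝ)) with hρdef
  have hbase : 0 < 2*I/(κ*mt*μ) := by positivity
  have hρ : 0 < ρ := by rw [hρdef]; positivity
  have hρd : ρ ^ (d:ℝ) = 2*I/(κ*mt*μ) := by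
    rw [hρdef, ← Real.rpow_mul hbase.le, one_div, inv_mul_cancel₀ hdne, Real.rpow_one]
  -- the annulus and the sector
  set Ann : Set (EuclideanSpace ℝ (Fin d)) :=
    {v : EuclideanSpace ℝ (Fin d) | ‖v - vt‖ ∈ Icc ρ (2*ρ)} with hAnn
  have hAnnMeas : MeasurableSet Ann := by
    rw [hAnn]
    have : Continuous (fun v : EuclideanSpace ℝ (Fin d) => ‖v - vt‖) :=
      (continuous_id.sub continuous_const).norm
    exact this.measurable measurableSet_Icc
  set S : Set (EuclideanSpace ℝ (Fin d)) := Ann ∩ C with hSdef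
  have hSsub : S ⊆ C := inter_subset_right
  have hsector := sector_volume d hd vt A μ hμ hA hAμ C hC ρ hρ
  have hSball : S ⊆ Metric.closedBall vt (2*ρ) := by
    intro v hv
    rw [Metric.mem_closedBall, dist_eq_norm]
    exact hv.1.2
  have hVfin : volume S ≠ ⊤ :=
    (lt_of_le_of_lt (measure_mono hSball) measure_closedBall_lt_top).ne
  set V : ℝ := (volume S).toReal with hVdef
  have hV : κ * μ * ρ ^ (d:ℝ) ≤ V := by
    have h1 : ENNReal.ofReal (κ * μ * ρ ^ (d:ℝ)) ≤ volume S := by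
      refine le_trans (le_of_eq ?_) hsector
      rw [hκ]
      congr 1
      field_simp
    rw [hVdef]
    exact (ENNReal.ofReal_le_iff_le_toReal hVfin).1 h1
  have hIκ : κ * mt * μ * ρ ^ (d:ℝ) = 2 * I := by
    rw [hρd]
    field_simp
  -- integral bounds
  have hgS : IntegrableOn g S := hgInt.mono_set hSsub
  have hconstS : IntegrableOn (fun _ => mt) S := by
    refine integrableOn_const ?_
    exact (lt_of_le_of_lt (measure_mono hSball) measure_closedBall_lt_top).ne
  have hSle : (∫ v' in S, g v') ≤ I := by
    rw [hIdef]
    refine setIntegral_mono_set hgInt ?_ (HasSubset.Subset.eventuallyLE hSsub)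
    exact Filter.Eventually.of_forall hg0
  have hIntS : (∫ v' in S, (mt - g v')) = mt * V - ∫ v' in S, g v' := by
    rw [integral_sub hconstS hgS, setIntegral_const, smul_eq_mul, hVdef, mul_comm]
    rfl
  have hlowV : 2 * I ≤ mt * V := by
    calc 2 * I = κ * mt * μ * ρ ^ (d:ℝ) := hIκ.symm
      _ = mt * (κ * μ * ρ ^ (d:ℝ)) := by ring
      _ ≤ mt * V := by
          exact mul_le_mul_of_nonneg_left hV hmt.le
  have hlow : I ≤ ∫ v' in S, (mt - g v') := by
    rw [hIntS]; linarith
  -- pointwise weight bound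
  set w : ℝ := (2*ρ) ^ (-(d:ℝ) - ν) with hw
  have hwpos : 0 < w := by rw [hw]; positivity
  -- lintegral chain
  have hFmeas : Measurable fun v' => ENNReal.ofReal (mt - g v') :=
    (measurable_const.sub hgmeas).ennreal_ofReal
  have step1 : ∫⁻ v' in S, ENNReal.ofReal ((mt - g v') * w) ≤
      ∫⁻ v' in C, ENNReal.ofReal ((mt - g v') * ‖vt - v'‖ ^ (-(d : ℝ) - ν)) := by
    refine le_trans ?_ (lintegral_mono_set hSsub)
    rw [hSdef, ← Measure.restrict_restrict hAnnMeas]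
    refine lintegral_mono_ae ?_
    filter_upwards [ae_restrict_mem hAnnMeas] with v hv
    refine ENNReal.ofReal_le_ofReal ?_
    have hvnorm : ‖vt - v‖ = ‖v - vt‖ := norm_sub_rev _ _
    have h1 : ρ ≤ ‖v - vt‖ := hv.1
    have h2 : ‖v - vt‖ ≤ 2*ρ := hv.2
    have hwle : w ≤ ‖vt - v‖ ^ (-(d : ℝ) - ν) := by
      rw [hw, hvnorm]
      exact Real.rpow_le_rpow_of_nonpos (lt_of_lt_of_le hρ h1) h2 (by linarith)
    exact mul_le_mul_of_nonneg_left hwle (by linarith [hg1 v])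
  have step2 : ∫⁻ v' in S, ENNReal.ofReal ((mt - g v') * w)
      = ENNReal.ofReal w * ∫⁻ v' in S, ENNReal.ofReal (mt - g v') := by
    rw [← lintegral_const_mul _ hFmeas]
    refine lintegral_congr fun v => ?_
    rw [← ENNReal.ofReal_mul hwpos.le, mul_comm]
  have step3 : ENNReal.ofReal (∫ v' in S, (mt - g v'))
      = ∫⁻ v' in S, ENNReal.ofReal (mt - g v') := by
    refine ofReal_integral_eq_lintegral_ofReal (hconstS.sub hgS) ?_
    exact Filter.Eventually.of_forall fun v => sub_nonneg.2 (hg1 v)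
  have hlintlow : ENNReal.ofReal (w * I) ≤
      ∫⁻ v' in C, ENNReal.ofReal ((mt - g v') * ‖vt - v'‖ ^ (-(d : ℝ) - ν)) := by
    refine le_trans ?_ step1
    rw [step2, ← step3, ENNReal.ofReal_mul hwpos.le]
    exact mul_le_mul_right (ENNReal.ofReal_le_ofReal hlow) _
  refine le_trans (le_of_eq ?_) hlintlow
  -- the real-number identity
  congr 1
  have hIeq : I = κ * mt * μ * ρ ^ (d:ℝ) / 2 := by rw [hIκ]; ring
  have hlogρ : (d:ℝ) * Real.log ρ =
      Real.log 2 + Real.log I - Real.log κ - Real.log mt - Real.log μ := by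
    have := Real.log_rpow hρ (d:ℝ)
    rw [← this, hρd]
    rw [Real.log_div (by positivity) (by positivity), Real.log_mul (by norm_num) hI.ne',
      Real.log_mul (by positivity) hμ.ne', Real.log_mul hκpos.ne' hmt.ne']
    ring
  have hLHSpos : 0 < c * mt ^ (1 + ν / (d:ℝ)) * μ ^ (1 + ν / (d:ℝ)) / I ^ (ν / (d:ℝ)) := by
    positivity
  have hRHSpos : 0 < w * I := by positivity
  rw [← Real.exp_log hLHSpos, ← Real.exp_log hRHSpos]
  congr 1
  rw [Real.log_div (by positivity) (by positivity),
    Real.log_mul (by positivity) (by positivity),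
    Real.log_mul hcpos.ne' (by positivity),
    Real.log_mul hwpos.ne' hI.ne',
    Real.log_rpow hmt, Real.log_rpow hμ, Real.log_rpow hI,
    hc, hw,
    Real.log_mul (by positivity) (by positivity),
    Real.log_mul (by positivity) (by positivity),
    Real.log_rpow (by norm_num : (0:ℝ) < 2),
    Real.log_rpow (by positivity : (0:ℝ) < κ/2),
    Real.log_rpow (by positivity : (0:ℝ) < 2*ρ),
    Real.log_div hκpos.ne' (by norm_num : (2:ℝ) ≠ 0),
    Real.log_mul (by norm_num : (2:ℝ) ≠ 0) hρ.ne']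
  have hlogI : Real.log I = Real.log κ + Real.log mt + Real.log μ
      + (d:ℝ) * Real.log ρ - Real.log 2 := by linarith [hlogρ]
  rw [hlogI]
  field_simp
  ring
end
end

section
/- Let d ≥ 1 and let M₁, E₀ > 0 and H₀ ∈ ℝ. Suppose f : ℝ^d → [0,∞) is measurable with ∫_{ℝ^d} f(v) dv ≥ M₁, ∫_{ℝ^d} |v|² f(v) dv ≤ E₀, and f·log f integrable with ∫_{ℝ^d} f(v) log f(v) dv ≤ H₀. Then there exist constants r, l, m > 0, depending only on d, M₁, E₀ and H₀, such that the Lebesgue measure of the set {v ∈ ℝ^d : f(v) > l} ∩ B_r satisfies |{v : f(v) > l} ∩ B_r| ≥ m, where B_r is the open ball of radius r centered at the origin. -/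
open MeasureTheory
open scoped ENNReal

noncomputable section

private lemma aux_gauss_integrable (d : ℕ) :
    Integrable (fun v : EuclideanSpace ℝ (Fin d) => Real.exp (-(1/2 : ℝ) * ‖v‖^2)) := by
  have h := GaussianFourier.integrable_cexp_neg_mul_sq_norm_add (V := EuclideanSpace ℝ (Fin d))
    (b := (1/2 : ℂ)) (by norm_num) 0 0
  simp only [zero_mul, mul_zero, add_zero] at h
  have h2 := h.norm
  have heq : ∀ v : EuclideanSpace ℝ (Fin d),
      ‖Complex.exp (-(1/2 : ℂ) * (‖v‖ : ℂ)^2)‖ = Real.exp (-(1/2 : ℝ) * ‖v‖^2) := by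
    intro v
    rw [Complex.norm_exp]
    congr 1
    have : (-(1/2 : ℂ) * (‖v‖ : ℂ)^2) = ((-(1/2 : ℝ) * ‖v‖^2 : ℝ) : ℂ) := by push_cast; ring
    rw [this, Complex.ofReal_re]
  exact (integrable_congr (Filter.Eventually.of_forall heq)).mp h2

private lemma aux_entropy_ptwise (t c : ℝ) (ht : 0 ≤ t) (hc : 0 ≤ c) :
    -(t * Real.log t) ≤ c * t + 2 * Real.exp (-(1/2 : ℝ) * c) := by
  rcases ht.eq_or_lt with h0 | h0
  · rw [← h0]
    simp
    positivity
  by_cases h1 : 1 ≤ t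
  · have h : 0 ≤ t * Real.log t := mul_nonneg ht (Real.log_nonneg h1)
    nlinarith [Real.exp_pos (-(1/2 : ℝ)*c), mul_nonneg hc ht]
  push_neg at h1
  by_cases h2 : Real.exp (-c) ≤ t
  · have hlog : -c ≤ Real.log t := by
      calc -c = Real.log (Real.exp (-c)) := (Real.log_exp _).symm
        _ ≤ Real.log t := Real.log_le_log (Real.exp_pos _) h2
    have h3 : t * (-Real.log t) ≤ t * c := mul_le_mul_of_nonneg_left (by linarith) ht
    nlinarith [Real.exp_pos (-(1/2 : ℝ)*c)]
  · push_neg at h2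
    set s := Real.sqrt t with hs_def
    have hs : 0 < s := Real.sqrt_pos.mpr h0
    have hlog : Real.log t = 2 * Real.log s := by
      rw [hs_def, Real.log_sqrt ht]; ring
    have hls : -Real.log s ≤ s⁻¹ := by
      have h := Real.log_le_sub_one_of_pos (inv_pos.mpr hs)
      rw [Real.log_inv] at h; linarith
    have hts : t * s⁻¹ = s := by
      have hss : s * s = t := Real.mul_self_sqrt ht
      field_simp
      linarith
    have hsle : s ≤ Real.exp (-(1/2 : ℝ)*c) := by
      have h3 : Real.exp (-c) = (Real.exp (-(1/2 : ℝ)*c))^2 := by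
        rw [sq, ← Real.exp_add]; ring_nf
      have h4 : s ≤ Real.sqrt (Real.exp (-c)) := Real.sqrt_le_sqrt h2.le
      rwa [h3, Real.sqrt_sq (Real.exp_pos _).le] at h4
    calc -(t * Real.log t) = 2 * (t * (-Real.log s)) := by rw [hlog]; ring
      _ ≤ 2 * (t * s⁻¹) := by
          have := mul_le_mul_of_nonneg_left hls ht
          linarith
      _ = 2 * s := by rw [hts]
      _ ≤ 2 * Real.exp (-(1/2 : ℝ)*c) := by linarith
      _ ≤ c*t + 2 * Real.exp (-(1/2 : ℝ)*c) := by nlinarith [mul_nonneg hc ht]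

/-- Mass, energy and entropy bounds force a lower bound on the measure of a
superlevel set inside a fixed ball (Lemma 4.6 of Silvestre). -/
theorem superlevel_set_lower_bound
    (d : ℕ) (hd : 1 ≤ d) (M₁ E₀ : ℝ) (H₀ : ℝ) (hM₁ : 0 < M₁) (hE₀ : 0 < E₀) :
    ∃ r l m : ℝ, 0 < r ∧ 0 < l ∧ 0 < m ∧
      ∀ f : EuclideanSpace ℝ (Fin d) → ℝ, Measurable f → (∀ v, 0 ≤ f v) →
        Integrable f → M₁ ≤ (∫ v, f v) →
        Integrable (fun v : EuclideanSpace ℝ (Fin d) => ‖v‖ ^ 2 * f v) →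
        (∫ v : EuclideanSpace ℝ (Fin d), ‖v‖ ^ 2 * f v) ≤ E₀ →
        Integrable (fun v : EuclideanSpace ℝ (Fin d) => f v * Real.log (f v)) →
        (∫ v : EuclideanSpace ℝ (Fin d), f v * Real.log (f v)) ≤ H₀ →
        ENNReal.ofReal m ≤
          volume ({v : EuclideanSpace ℝ (Fin d) | l < f v} ∩
            Metric.ball (0 : EuclideanSpace ℝ (Fin d)) r) := by
  classical
  have hgauss := aux_gauss_integrable d
  set G : ℝ := ∫ v : EuclideanSpace ℝ (Fin d), Real.exp (-(1/2:ℝ) * ‖v‖^2) with hGdef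
  have hGnn : 0 ≤ G := integral_nonneg fun v => (Real.exp_pos _).le
  set H₁ : ℝ := max (H₀ + E₀ + 2*G) 1 with hH₁def
  have hH₁pos : (0:ℝ) < H₁ := lt_of_lt_of_le one_pos (le_max_right _ _)
  set K : ℝ := Real.exp (4*H₁/M₁) with hKdef
  have hKpos : 0 < K := Real.exp_pos _
  have hK1 : 1 < K := by
    calc (1:ℝ) = Real.exp 0 := Real.exp_zero.symm
      _ < K := Real.exp_lt_exp.mpr (by positivity)
  have hlogK : Real.log K = 4*H₁/M₁ := Real.log_exp _
  have hlogKpos : 0 < Real.log K := by rw [hlogK]; positivity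
  set r : ℝ := Real.sqrt (4*E₀/M₁) with hrdef
  have hrpos : 0 < r := Real.sqrt_pos.mpr (by positivity)
  have hr2 : r^2 = 4*E₀/M₁ := Real.sq_sqrt (by positivity)
  set B := Metric.ball (0 : EuclideanSpace ℝ (Fin d)) r with hBdef
  have hBmeas : MeasurableSet B := measurableSet_ball
  have hBfin : volume B < ⊤ := measure_ball_lt_top
  have hBpos : 0 < (volume B).toReal :=
    ENNReal.toReal_pos (ne_of_gt (Metric.measure_ball_pos _ _ hrpos)) hBfin.ne
  set vB : ℝ := (volume B).toReal with hvBdef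
  have hlpos : 0 < M₁/(4*vB) := by positivity
  refine ⟨r, M₁/(4*vB), M₁/(4*K), hrpos, hlpos, by positivity, ?_⟩
  set l : ℝ := M₁/(4*vB) with hldef
  intro f hf hf0 hfi hM hfi2 hE hfli hH
  have hSK : MeasurableSet {v : EuclideanSpace ℝ (Fin d) | K < f v} :=
    measurableSet_lt measurable_const hf
  have hSlle : MeasurableSet {v : EuclideanSpace ℝ (Fin d) | f v ≤ l} :=
    measurableSet_le hf measurable_const
  have hSllt : MeasurableSet {v : EuclideanSpace ℝ (Fin d) | l < f v} :=
    measurableSet_lt measurable_const hf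
  have hSKle : MeasurableSet {v : EuclideanSpace ℝ (Fin d) | f v ≤ K} :=
    measurableSet_le hf measurable_const
  -- tail mass outside the ball
  have tail : ∫ v in Bᶜ, f v ≤ M₁/4 := by
    have h1 : ∀ v ∈ Bᶜ, f v ≤ ‖v‖^2 * f v / r^2 := by
      intro v hv
      have hnorm : r ≤ ‖v‖ := by
        simp only [hBdef, Set.mem_compl_iff, Metric.mem_ball, dist_zero_right, not_lt] at hv
        exact hv
      have h2 : r^2 * f v ≤ ‖v‖^2 * f v :=
        mul_le_mul_of_nonneg_right (by nlinarith) (hf0 v)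
      rw [le_div_iff₀ (by positivity)]
      nlinarith
    calc ∫ v in Bᶜ, f v ≤ ∫ v in Bᶜ, ‖v‖^2 * f v / r^2 :=
        setIntegral_mono_on hfi.integrableOn (hfi2.div_const _).integrableOn hBmeas.compl h1
      _ ≤ ∫ v, ‖v‖^2 * f v / r^2 :=
        setIntegral_le_integral (hfi2.div_const _)
          (Filter.Eventually.of_forall fun v => by
            have := hf0 v
            positivity)
      _ = (∫ v, ‖v‖^2 * f v) / r^2 := integral_div _ _
      _ ≤ E₀ / r^2 := by gcongr
      _ = M₁/4 := by rw [hr2]; field_simp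
  -- entropy controls mass where f is huge
  have entK : ∫ v in {v | K < f v}, f v * Real.log (f v) ≤ H₁ := by
    have hsplit : (∫ v in {v | K < f v}, f v * Real.log (f v)) +
        (∫ v in {v | K < f v}ᶜ, f v * Real.log (f v)) = ∫ v, f v * Real.log (f v) :=
      integral_add_compl hSK hfli
    have hbd_int : Integrable (fun v : EuclideanSpace ℝ (Fin d) =>
        ‖v‖^2 * f v + 2 * Real.exp (-(1/2:ℝ)*‖v‖^2)) := hfi2.add (hgauss.const_mul 2)
    have hneg : -(∫ v in {v | K < f v}ᶜ, f v * Real.log (f v)) ≤ E₀ + 2*G := by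
      rw [← integral_neg]
      calc ∫ v in {v | K < f v}ᶜ, -(f v * Real.log (f v))
          ≤ ∫ v in {v | K < f v}ᶜ, (‖v‖^2 * f v + 2*Real.exp (-(1/2:ℝ)*‖v‖^2)) :=
            setIntegral_mono_on hfli.neg.integrableOn hbd_int.integrableOn hSK.compl
              (fun v _ => aux_entropy_ptwise (f v) (‖v‖^2) (hf0 v) (by positivity))
        _ ≤ ∫ v, (‖v‖^2 * f v + 2*Real.exp (-(1/2:ℝ)*‖v‖^2)) :=
            setIntegral_le_integral hbd_int
              (Filter.Eventually.of_forall fun v => by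
                have := hf0 v
                positivity)
        _ = (∫ v, ‖v‖^2 * f v) + 2*G := by
            rw [integral_add hfi2 (hgauss.const_mul 2), integral_const_mul]
        _ ≤ E₀ + 2*G := by linarith
    have h2 : ∫ v in {v | K < f v}, f v * Real.log (f v) ≤ H₀ + E₀ + 2*G := by linarith
    exact h2.trans (le_max_left _ _)
  have tailK : ∫ v in {v | K < f v}, f v ≤ M₁/4 := by
    have h1 : ∀ v ∈ {v : EuclideanSpace ℝ (Fin d) | K < f v},
        f v ≤ f v * Real.log (f v) / Real.log K := by
      intro v hv
      have hfvK : K < f v := hv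
      have h3 : Real.log K ≤ Real.log (f v) := Real.log_le_log hKpos hfvK.le
      rw [le_div_iff₀ hlogKpos]
      have h4 := mul_le_mul_of_nonneg_left h3 (hf0 v)
      linarith
    calc ∫ v in {v | K < f v}, f v
        ≤ ∫ v in {v | K < f v}, f v * Real.log (f v) / Real.log K :=
          setIntegral_mono_on hfi.integrableOn (hfli.div_const _).integrableOn hSK h1
      _ = (∫ v in {v | K < f v}, f v * Real.log (f v)) / Real.log K := integral_div _ _
      _ ≤ H₁ / Real.log K := by gcongr
      _ = M₁/4 := by rw [hlogK]; field_simp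
  -- sub-level mass inside the ball
  have low : ∫ v in B ∩ {v | f v ≤ l}, f v ≤ M₁/4 := by
    have hmeas : MeasurableSet (B ∩ {v | f v ≤ l}) := hBmeas.inter hSlle
    have hfin : volume (B ∩ {v | f v ≤ l}) ≤ volume B := measure_mono Set.inter_subset_left
    calc ∫ v in B ∩ {v | f v ≤ l}, f v ≤ ∫ _v in B ∩ {v | f v ≤ l}, l :=
        setIntegral_mono_on hfi.integrableOn
          (integrableOn_const (lt_of_le_of_lt hfin hBfin).ne) hmeas
          (fun v hv => hv.2)
      _ = (volume (B ∩ {v | f v ≤ l})).toReal * l := by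
          rw [setIntegral_const, smul_eq_mul]; rfl
      _ ≤ vB * l := mul_le_mul_of_nonneg_right
          (ENNReal.toReal_mono hBfin.ne hfin) hlpos.le
      _ = M₁/4 := by rw [hldef]; field_simp
  -- the superlevel set inside the ball
  set A := {v : EuclideanSpace ℝ (Fin d) | l < f v} ∩ B with hAdef
  have hAmeas : MeasurableSet A := hSllt.inter hBmeas
  have hAfin : volume A < ⊤ := lt_of_le_of_lt (measure_mono Set.inter_subset_right) hBfin
  set S2 := A ∩ {v : EuclideanSpace ℝ (Fin d) | f v ≤ K} with hS2def
  have hS2meas : MeasurableSet S2 := hAmeas.inter hSKle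
  have hS2fin : volume S2 ≤ volume A := measure_mono Set.inter_subset_left
  have mid : ∫ v in S2, f v ≤ K * (volume A).toReal := by
    calc ∫ v in S2, f v ≤ ∫ _v in S2, K :=
        setIntegral_mono_on hfi.integrableOn
          (integrableOn_const (lt_of_le_of_lt hS2fin hAfin).ne) hS2meas
          (fun v hv => hv.2)
      _ = (volume S2).toReal * K := by rw [setIntegral_const, smul_eq_mul]; rfl
      _ ≤ (volume A).toReal * K := mul_le_mul_of_nonneg_right
          (ENNReal.toReal_mono hAfin.ne hS2fin) hKpos.le
      _ = K * (volume A).toReal := mul_comm _ _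
  -- decomposition of the total mass
  have d1 : ∫ v, f v = (∫ v in B, f v) + ∫ v in Bᶜ, f v :=
    (integral_add_compl hBmeas hfi).symm
  have d2 : ∫ v in B, f v =
      (∫ v in B ∩ {v | f v ≤ l}, f v) + ∫ v in B ∩ {v | l < f v}, f v := by
    have hBU : B = (B ∩ {v | f v ≤ l}) ∪ (B ∩ {v | l < f v}) := by
      ext v
      simp only [Set.mem_union, Set.mem_inter_iff, Set.mem_setOf_eq]
      constructor
      · intro hv
        rcases le_or_gt (f v) l with h | h
        · exact Or.inl ⟨hv, h⟩
        · exact Or.inr ⟨hv, h⟩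
      · rintro (⟨hv, _⟩ | ⟨hv, _⟩) <;> exact hv
    conv_lhs => rw [hBU]
    apply setIntegral_union
    · rw [Set.disjoint_left]
      rintro v ⟨_, hle⟩ ⟨_, hlt⟩
      simp only [Set.mem_setOf_eq] at hle hlt
      exact absurd hlt (not_lt.mpr hle)
    · exact hBmeas.inter hSllt
    · exact hfi.integrableOn
    · exact hfi.integrableOn
  have d3 : ∫ v in B ∩ {v | l < f v}, f v ≤
      (∫ v in S2, f v) + ∫ v in {v | K < f v}, f v := by
    have hsets : B ∩ {v | l < f v} =
        S2 ∪ (B ∩ {v | l < f v} ∩ {v | K < f v}) := by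
      rw [hS2def, hAdef]
      ext v
      simp only [Set.mem_union, Set.mem_inter_iff, Set.mem_setOf_eq]
      constructor
      · intro hv
        rcases le_or_gt (f v) K with h | h
        · exact Or.inl ⟨⟨hv.2, hv.1⟩, h⟩
        · exact Or.inr ⟨hv, h⟩
      · rintro (⟨⟨h1, h2⟩, _⟩ | ⟨hv, _⟩)
        · exact ⟨h2, h1⟩
        · exact hv
    rw [hsets, setIntegral_union]
    · refine add_le_add le_rfl ?_
      exact setIntegral_mono_set hfi.integrableOn
        (Filter.Eventually.of_forall fun v => hf0 v)
        (HasSubset.Subset.eventuallyLE (fun v hv => hv.2))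
    · rw [Set.disjoint_left]
      rintro v ⟨_, hle⟩ ⟨_, hlt⟩
      simp only [Set.mem_setOf_eq] at hle hlt
      exact absurd hlt (not_lt.mpr hle)
    · exact (hBmeas.inter hSllt).inter hSK
    · exact hfi.integrableOn
    · exact hfi.integrableOn
  -- conclusion
  have key : M₁/4 ≤ K * (volume A).toReal := by linarith
  apply ENNReal.ofReal_le_of_le_toReal
  rw [div_le_iff₀ (by positivity)]
  calc M₁ = (M₁/4) * 4 := by ring
    _ ≤ (K * (volume A).toReal) * 4 := by linarith
    _ = (volume A).toReal * (4*K) := by ring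
end
end

section
/- Let d ≥ 1, α > 0 and p ∈ (0,2]. Define the Mittag-Leffler weight w₂(v) = ℰ_{2/p}(α^{2/p} ⟨v⟩²) for v ∈ ℝ^d, where ℰ_a(x) = Σ_{k=0}^{∞} x^k / Γ(ak+1) for a > 0 and x ≥ 0. Then w₂(v) ≥ 1 for all v, the function v ↦ 1/w₂(v) is differentiable on ℝ^d, and there exists a constant C > 0 depending only on α and p such that ‖∇_v ( 1 / w₂(v) )‖ ≤ C ⟨v⟩ for all v ∈ ℝ^d. -/
open scoped Nat

noncomputable section

/-- The Mittag-Leffler function `ℰ_a(x) = ∑_{k=0}^∞ x^k / Γ(ak+1)`. -/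
def mittagLeffler (a x : ℝ) : ℝ :=
  ∑' k : ℕ, x ^ k / Real.Gamma (a * k + 1)

private lemma mlGammaPos (a : ℝ) (ha : 0 ≤ a) (k : ℕ) : 0 < Real.Gamma (a * k + 1) :=
  Real.Gamma_pos_of_pos (by positivity)

private lemma mlFactorialLeGamma (a : ℝ) (ha : 1 ≤ a) (k : ℕ) :
    (k ! : ℝ) ≤ Real.Gamma (a * k + 1) := by
  rcases Nat.eq_zero_or_pos k with hk | hk
  · subst hk; simp [Real.Gamma_one]
  · have hk1 : (1 : ℝ) ≤ (k : ℝ) := Nat.one_le_cast.mpr hk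
    have h1 : ((k : ℝ) + 1) ≤ a * k + 1 := by nlinarith
    have h2 : (2 : ℝ) ≤ (k : ℝ) + 1 := by linarith
    calc (k ! : ℝ) = Real.Gamma ((k : ℝ) + 1) := (Real.Gamma_nat_eq_factorial k).symm
    _ ≤ Real.Gamma (a * k + 1) :=
        Real.Gamma_strictMonoOn_Ici.monotoneOn h2 (le_trans h2 h1) h1

private lemma mlSummable (a : ℝ) (ha : 1 ≤ a) (x : ℝ) :
    Summable (fun k : ℕ => x ^ k / Real.Gamma (a * k + 1)) := by
  apply Summable.of_norm
  apply Summable.of_nonneg_of_le (fun k => norm_nonneg _) (fun k => ?_)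
    (Real.summable_pow_div_factorial |x|)
  have hΓ := mlGammaPos a (by linarith) k
  rw [norm_div, Real.norm_eq_abs, Real.norm_eq_abs, abs_pow, abs_of_pos hΓ]
  exact div_le_div₀ (by positivity) le_rfl (by positivity) (mlFactorialLeGamma a ha k)

private lemma mlSummableAux (R : ℝ) :
    Summable (fun k : ℕ => (k : ℝ) * R ^ (k - 1) / (k ! : ℝ)) := by
  apply (summable_nat_add_iff 1).mp
  have heq : (fun n : ℕ => ((n + 1 : ℕ) : ℝ) * R ^ ((n + 1) - 1) / ((n + 1)! : ℝ))
      = fun n : ℕ => R ^ n / (n ! : ℝ) := by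
    funext n
    have hfac : (0 : ℝ) < (n ! : ℝ) := Nat.cast_pos.mpr n.factorial_pos
    rw [Nat.add_sub_cancel, Nat.factorial_succ]
    push_cast
    field_simp
  rw [heq]
  exact Real.summable_pow_div_factorial R

private lemma mlSummable' (a : ℝ) (ha : 1 ≤ a) (x : ℝ) :
    Summable (fun k : ℕ => (k : ℝ) * x ^ (k - 1) / Real.Gamma (a * k + 1)) := by
  apply Summable.of_norm
  apply Summable.of_nonneg_of_le (fun k => norm_nonneg _) (fun k => ?_) (mlSummableAux |x|)
  have hΓ := mlGammaPos a (by linarith) k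
  rw [norm_div, norm_mul, Real.norm_eq_abs, Real.norm_eq_abs, Real.norm_eq_abs, abs_pow,
    abs_of_pos hΓ, Nat.abs_cast]
  exact div_le_div₀ (by positivity) le_rfl (by positivity) (mlFactorialLeGamma a ha k)

private lemma mlHasDerivAt (a : ℝ) (ha : 1 ≤ a) (x : ℝ) :
    HasDerivAt (fun y => ∑' k : ℕ, y ^ k / Real.Gamma (a * k + 1))
      (∑' k : ℕ, (k : ℝ) * x ^ (k - 1) / Real.Gamma (a * k + 1)) x := by
  set R : ℝ := |x| + 1 with hR
  have hxR : x ∈ Set.Ioo (-R) R := by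
    have h : |x| < R := by rw [hR]; exact lt_add_one _
    exact abs_lt.mp h
  apply hasDerivAt_tsum_of_isPreconnected (mlSummableAux R) isOpen_Ioo
    (isPreconnected_Ioo) (fun k y _ => (hasDerivAt_pow k y).div_const _)
    (fun k y hy => ?_)
    (show (0:ℝ) ∈ Set.Ioo (-R) R from ⟨neg_neg_of_pos (by positivity), by positivity⟩)
    (mlSummable a ha 0) hxR
  -- bound on derivative terms
  have hΓ := mlGammaPos a (by linarith) k
  have hyR : |y| ≤ R := by
    rw [abs_le]; exact ⟨hy.1.le, hy.2.le⟩
  rw [Real.norm_eq_abs, abs_div, abs_mul, abs_pow, abs_of_pos hΓ, Nat.abs_cast]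
  exact div_le_div₀ (by positivity)
    (mul_le_mul_of_nonneg_left (pow_le_pow_left₀ (abs_nonneg y) hyR _) k.cast_nonneg)
    (by positivity) (mlFactorialLeGamma a ha k)

private lemma mlOneLe (a x : ℝ) (ha : 1 ≤ a) (hx : 0 ≤ x) :
    1 ≤ ∑' k : ℕ, x ^ k / Real.Gamma (a * k + 1) := by
  have h := Summable.le_tsum (mlSummable a ha x) 0 (fun k _ =>
    div_nonneg (pow_nonneg hx k) (mlGammaPos a (by linarith) k).le)
  simpa [Real.Gamma_one] using h

private lemma mlDerivNonneg (a x : ℝ) (ha : 1 ≤ a) (hx : 0 ≤ x) :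
    0 ≤ ∑' k : ℕ, (k : ℝ) * x ^ (k - 1) / Real.Gamma (a * k + 1) :=
  tsum_nonneg fun k => div_nonneg (mul_nonneg k.cast_nonneg (pow_nonneg hx _))
    (mlGammaPos a (by linarith) k).le

private lemma mlDerivLeSelf (a x : ℝ) (ha : 1 ≤ a) (hx : 0 ≤ x) :
    (∑' k : ℕ, (k : ℝ) * x ^ (k - 1) / Real.Gamma (a * k + 1)) ≤
      ∑' k : ℕ, x ^ k / Real.Gamma (a * k + 1) := by
  have hs' := mlSummable' a ha x
  rw [Summable.tsum_eq_zero_add hs']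
  simp only [Nat.cast_zero, zero_mul, zero_div, zero_add]
  refine Summable.tsum_le_tsum (fun k => ?_) ((summable_nat_add_iff 1).mpr hs') (mlSummable a ha x)
  have hΓ1 := mlGammaPos a (by linarith) k
  have hΓ2 := mlGammaPos a (by linarith) (k + 1)
  have hxk : (0 : ℝ) ≤ x ^ k := pow_nonneg hx k
  have key : ((k : ℝ) + 1) * Real.Gamma (a * k + 1) ≤ Real.Gamma (a * (k + 1) + 1) := by
    have h1 : ((k : ℝ) + 1) * Real.Gamma (a * k + 1) ≤ (a * k + 1) * Real.Gamma (a * k + 1) := by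
      have : ((k : ℝ) + 1) ≤ a * k + 1 := by nlinarith [Nat.cast_nonneg (α := ℝ) k]
      nlinarith
    have h2 : (a * k + 1) * Real.Gamma (a * k + 1) = Real.Gamma (a * k + 1 + 1) :=
      (Real.Gamma_add_one (by positivity)).symm
    have h3 : Real.Gamma (a * k + 1 + 1) ≤ Real.Gamma (a * (k + 1) + 1) := by
      have hm1 : (2 : ℝ) ≤ a * k + 1 + 1 := by nlinarith [Nat.cast_nonneg (α := ℝ) k]
      have hle : a * k + 1 + 1 ≤ a * (k + 1) + 1 := by nlinarith
      exact Real.Gamma_strictMonoOn_Ici.monotoneOn hm1 (le_trans hm1 hle) hle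
    push_cast at h3 ⊢
    linarith
  have hpow : x ^ ((k + 1) - 1) = x ^ k := by rw [Nat.add_sub_cancel]
  rw [hpow, div_le_div_iff₀ (by exact_mod_cast hΓ2) hΓ1]
  have hmul := mul_le_mul_of_nonneg_left key hxk
  push_cast at hmul ⊢
  nlinarith

/-- Property (P4) for the Mittag-Leffler weight
`w₂(v) = ℰ_{2/p}(α^{2/p} ⟨v⟩²)`: it is at least `1`, its reciprocal is
differentiable, and the gradient of the reciprocal is bounded by `C ⟨v⟩`. -/
theorem mittagLeffler_weight_gradient_bound
    (d : ℕ) (hd : 1 ≤ d) (α p : ℝ) (hα : 0 < α) (hp : 0 < p) (hp2 : p ≤ 2) :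
    (∀ v : EuclideanSpace ℝ (Fin d),
      1 ≤ mittagLeffler (2 / p) (α ^ (2 / p) * (1 + ‖v‖ ^ 2))) ∧
    Differentiable ℝ (fun v : EuclideanSpace ℝ (Fin d) =>
      (mittagLeffler (2 / p) (α ^ (2 / p) * (1 + ‖v‖ ^ 2)))⁻¹) ∧
    ∃ C : ℝ, 0 < C ∧
      ∀ v : EuclideanSpace ℝ (Fin d),
        ‖gradient (fun v : EuclideanSpace ℝ (Fin d) =>
            (mittagLeffler (2 / p) (α ^ (2 / p) * (1 + ‖v‖ ^ 2)))⁻¹) v‖ ≤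
          C * Real.sqrt (1 + ‖v‖ ^ 2) := by
  have ha : 1 ≤ 2 / p := (one_le_div hp).mpr hp2
  set a : ℝ := 2 / p with ha_def
  set c : ℝ := α ^ (2 / p) with hc_def
  have hc : 0 < c := Real.rpow_pos_of_pos hα _
  set g : ℝ → ℝ := fun x => ∑' k : ℕ, x ^ k / Real.Gamma (a * k + 1) with hg_def
  set g' : ℝ → ℝ := fun x => ∑' k : ℕ, (k : ℝ) * x ^ (k - 1) / Real.Gamma (a * k + 1)
    with hg'_def
  have hml : ∀ x : ℝ, mittagLeffler a x = g x := fun x => rfl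
  -- the key per-point gradient computation
  have key : ∀ v : EuclideanSpace ℝ (Fin d),
      HasGradientAt (fun v : EuclideanSpace ℝ (Fin d) =>
          (mittagLeffler a (c * (1 + ‖v‖ ^ 2)))⁻¹)
        (((-(g' (c * (1 + ‖v‖ ^ 2))) / (g (c * (1 + ‖v‖ ^ 2))) ^ 2) * (c * 2)) • v) v := by
    intro v
    set X : ℝ := c * (1 + ‖v‖ ^ 2) with hX_def
    have hX : 0 < X := by positivity
    have hgpos : 0 < g X := lt_of_lt_of_le one_pos (mlOneLe a X ha hX.le)
    have hd1 : HasDerivAt g (g' X) X := mlHasDerivAt a ha X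
    have hd2 : HasDerivAt (fun x => (g x)⁻¹) (-(g' X) / (g X) ^ 2) X :=
      hd1.inv hgpos.ne'
    have hF := (((hasStrictFDerivAt_norm_sq v).hasFDerivAt).const_add 1).const_mul c
    have hcomp := hd2.comp_hasFDerivAt v hF
    rw [hasGradientAt_iff_hasFDerivAt]
    refine hcomp.congr_fderiv ?_
    apply ContinuousLinearMap.ext
    intro w
    simp only [InnerProductSpace.toDual_apply_apply, ContinuousLinearMap.coe_smul',
      Pi.smul_apply, innerSL_apply_apply, real_inner_smul_left, smul_eq_mul, ← Nat.cast_smul_eq_nsmul ℝ,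
      Nat.cast_ofNat]
    ring
  -- bound on the scalar coefficient
  have hcoef : ∀ v : EuclideanSpace ℝ (Fin d),
      |(-(g' (c * (1 + ‖v‖ ^ 2))) / (g (c * (1 + ‖v‖ ^ 2))) ^ 2) * (c * 2)| ≤ 2 * c := by
    intro v
    set X : ℝ := c * (1 + ‖v‖ ^ 2) with hX_def
    have hX : 0 < X := by positivity
    have hg1 : 1 ≤ g X := mlOneLe a X ha hX.le
    have hg'0 : 0 ≤ g' X := mlDerivNonneg a X ha hX.le
    have hgle : g' X ≤ g X := mlDerivLeSelf a X ha hX.le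
    have hD : |(-(g' X) / (g X) ^ 2)| ≤ 1 := by
      rw [abs_div, abs_neg, abs_of_nonneg hg'0, abs_of_pos (by positivity : (0:ℝ) < (g X)^2),
        div_le_one (by positivity)]
      nlinarith
    calc |(-(g' X) / (g X) ^ 2) * (c * 2)| = |(-(g' X) / (g X) ^ 2)| * (c * 2) := by
          rw [abs_mul, abs_of_pos (by positivity : (0:ℝ) < c * 2)]
    _ ≤ 1 * (c * 2) := mul_le_mul_of_nonneg_right hD (by positivity)
    _ = 2 * c := by ring
  refine ⟨fun v => ?_, fun v => ((key v).differentiableAt), ⟨2 * c, by positivity, fun v => ?_⟩⟩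
  · rw [hml]
    exact mlOneLe a _ ha (by positivity)
  · rw [(key v).gradient, norm_smul, Real.norm_eq_abs]
    have hv : ‖v‖ ≤ Real.sqrt (1 + ‖v‖ ^ 2) := by
      have h := Real.sqrt_le_sqrt (show ‖v‖ ^ 2 ≤ 1 + ‖v‖ ^ 2 by linarith)
      rwa [Real.sqrt_sq (norm_nonneg v)] at h
    have h1 := hcoef v
    have h2 : (0 : ℝ) ≤ Real.sqrt (1 + ‖v‖ ^ 2) := Real.sqrt_nonneg _
    have h3 : (0 : ℝ) ≤ ‖v‖ := norm_nonneg v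
    have h4 : (0 : ℝ) ≤ |(-(g' (c * (1 + ‖v‖ ^ 2))) / (g (c * (1 + ‖v‖ ^ 2))) ^ 2) * (c * 2)| :=
      abs_nonneg _
    nlinarith
end
end
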